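/- arXiv:0907.2450 — 4 statements merged into one kernel-verified Lean document; each statement's English description precedes it below -/
import Mathlib

section
/- The contraction map φ_k : Λ^k(C^{2n}) → Λ^{k-2}(C^{2n}) defined by φ_k(v_1 ∧ ... ∧ v_k) = Σ_{i<j} Ω(v_i,v_j)(-1)^{i+j-1} v_1 ∧ ... ∧ v̂_i ∧ ... ∧ v̂_j ∧ ... ∧ v_k, where Ω is the standard symplectic form on C^{2n}, is a surjective linear map for 2 ≤ k ≤ n. -/
/-!
The symplectic contraction map `φ_k : Λ^k(ℂ^{2n}) → Λ^{k-2}(ℂ^{2n})` is a surjective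
linear map for `2 ≤ k ≤ n`.  We write `k = k' + 2`.
-/

noncomputable section

/-- `ℂ^{2n}`, with basis indexed in the order `e_1, …, e_n, e_{n̄}, …, e_{1̄}`. -/
abbrev Vsp (n : ℕ) := Fin (2 * n) → ℂ

/-- The standard symplectic form `Ω = Σ_i e_i^* ∧ e_{ī}^*` on `ℂ^{2n}`
(the basis vector `e_{ī}` sits at position `2n-1-i`, in `0`-based indexing). -/
def OmegaForm (n : ℕ) (v w : Vsp n) : ℂ :=
  ∑ i : Fin n,
    (v ⟨(i : ℕ), by have := i.isLt; omega⟩ * w ⟨2 * n - 1 - (i : ℕ), by have := i.isLt; omega⟩ -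
      v ⟨2 * n - 1 - (i : ℕ), by have := i.isLt; omega⟩ * w ⟨(i : ℕ), by have := i.isLt; omega⟩)

/-- The family `v` with its `i`-th and `j`-th entries (`i < j`) omitted. -/
def omit2 {α : Type*} {k : ℕ} (v : Fin (k + 2) → α) (i j : Fin (k + 2)) (hij : i < j) :
    Fin k → α :=
  fun m =>
    v (j.succAbove
        ((⟨(i : ℕ), by have h1 := Fin.lt_def.mp hij; have h2 := j.isLt; omega⟩ :
          Fin (k + 1)).succAbove m))



set_option maxHeartbeats 1000000
noncomputable section SympAux
open ExteriorAlgebra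

variable {R : Type*} [CommRing R] {M : Type*} [AddCommGroup M] [Module R M]

/-- single contraction operator on the exterior algebra -/
def Ctr (d : Module.Dual R M) : ExteriorAlgebra R M →ₗ[R] ExteriorAlgebra R M :=
  CliffordAlgebra.contractLeft (Q := (0 : QuadraticForm R M)) d

lemma Ctr_ι_mul (d : Module.Dual R M) (a : M) (x : ExteriorAlgebra R M) :
    Ctr d (ι R a * x) = d a • x - ι R a * Ctr d x :=
  CliffordAlgebra.contractLeft_ι_mul _ _ _

lemma Ctr_one (d : Module.Dual R M) : Ctr d (1 : ExteriorAlgebra R M) = 0 :=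
  CliffordAlgebra.contractLeft_one _ _

lemma Ctr_algebraMap (d : Module.Dual R M) (r : R) :
    Ctr d (algebraMap R (ExteriorAlgebra R M) r) = 0 :=
  CliffordAlgebra.contractLeft_algebraMap _ _ _

lemma Ctr_ιMulti (d : Module.Dual R M) (m : ℕ) (v : Fin (m + 1) → M) :
    Ctr d (ιMulti R (m + 1) v) =
      ∑ p : Fin (m + 1), ((-1 : R) ^ (p : ℕ) * d (v p)) • ιMulti R m (v ∘ p.succAbove) := by
  induction m with
  | zero =>
      rw [ιMulti_succ_apply]
      have : ιMulti R 0 (Matrix.vecTail v) = 1 := ιMulti_zero_apply _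
      rw [this, mul_one]
      have : Ctr d (ι R (v 0) * 1) = d (v 0) • 1 - ι R (v 0) * Ctr d 1 := Ctr_ι_mul d _ 1
      rw [mul_one] at this
      rw [this, Ctr_one, mul_zero, sub_zero]
      simp
  | succ m ih =>
      have hfam : ∀ p : Fin (m + 1),
          v ∘ (p.succ).succAbove = Matrix.vecCons (v 0) (Matrix.vecTail v ∘ p.succAbove) := by
        intro p
        funext q
        refine Fin.cases ?_ (fun r => ?_) q
        · show v (p.succ.succAbove 0) = v 0
          congr 1
        · show v (p.succ.succAbove r.succ) = Matrix.vecTail v (p.succAbove r)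
          rw [Fin.succ_succAbove_succ]
          rfl
      rw [ιMulti_succ_apply, Ctr_ι_mul, ih]
      rw [Fin.sum_univ_succ (f := fun p : Fin (m + 2) =>
        ((-1 : R) ^ (p : ℕ) * d (v p)) • ιMulti R (m + 1) (v ∘ p.succAbove))]
      have h0 : (v ∘ (0 : Fin (m + 2)).succAbove) = Matrix.vecTail v := by
        funext q; show v (Fin.succAbove 0 q) = _
        rw [Fin.succAbove_zero]; rfl
      rw [h0]
      rw [Finset.mul_sum]
      simp only [mul_smul_comm]
      have hterm : ∀ p : Fin (m + 1),
          ι R (v 0) * ιMulti R m (Matrix.vecTail v ∘ p.succAbove) =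
            ιMulti R (m + 1) (v ∘ (p.succ).succAbove) := by
        intro p
        rw [hfam p, ιMulti_succ_apply, Matrix.tail_cons, Matrix.cons_val_zero]
      simp only [hterm]
      rw [sub_eq_iff_eq_add]
      rw [Fin.val_zero, pow_zero, one_mul]
      rw [add_assoc]
      have : (∑ i : Fin (m + 1),
            ((-1 : R) ^ ((i.succ : Fin (m+2)) : ℕ) * d (v i.succ)) •
              ιMulti R (m + 1) (v ∘ i.succ.succAbove)) +
          ∑ p : Fin (m + 1),
            ((-1 : R) ^ (p : ℕ) * d (Matrix.vecTail v p)) •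
              ιMulti R (m + 1) (v ∘ p.succ.succAbove) = 0 := by
        rw [← Finset.sum_add_distrib]
        apply Finset.sum_eq_zero
        intro p _
        have hv : Matrix.vecTail v p = v p.succ := rfl
        rw [hv, ← add_smul]
        have : (-1 : R) ^ ((p.succ : Fin (m+2)) : ℕ) * d (v p.succ) +
            (-1 : R) ^ (p : ℕ) * d (v p.succ) = 0 := by
          rw [Fin.val_succ, pow_succ]
          ring
        rw [this, zero_smul]
      rw [this, add_zero]

lemma ιMulti_mem (m : ℕ) (v : Fin m → M) : ιMulti R m v ∈ ⋀[R]^m M :=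
  ιMulti_range R m (Set.mem_range_self v)

lemma Ctr_mem (d : Module.Dual R M) (m : ℕ) {x : ExteriorAlgebra R M}
    (hx : x ∈ ⋀[R]^(m + 1) M) : Ctr d x ∈ ⋀[R]^m M := by
  rw [← ιMulti_span_fixedDegree] at hx
  induction hx using Submodule.span_induction with
  | mem y hy =>
      obtain ⟨v, rfl⟩ := hy
      rw [Ctr_ιMulti]
      exact Submodule.sum_mem _ fun p _ => Submodule.smul_mem _ _ (ιMulti_mem m _)
  | zero => rw [map_zero]; exact Submodule.zero_mem _
  | add y z _ _ hy hz => rw [map_add]; exact Submodule.add_mem _ hy hz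
  | smul c y _ hy => rw [map_smul]; exact Submodule.smul_mem _ _ hy

lemma Ctr_zero_degree (d : Module.Dual R M) {x : ExteriorAlgebra R M}
    (hx : x ∈ ⋀[R]^0 M) : Ctr d x = 0 := by
  have hx' : x ∈ (LinearMap.range (ι R : M →ₗ[R] ExteriorAlgebra R M)) ^ 0 := hx
  rw [pow_zero, Submodule.mem_one] at hx'
  clear hx; rename' hx' => hx
  obtain ⟨r, rfl⟩ := hx
  exact Ctr_algebraMap d r

lemma mul_mem_graded {a b : ℕ} {x y : ExteriorAlgebra R M}
    (hx : x ∈ ⋀[R]^a M) (hy : y ∈ ⋀[R]^b M) : x * y ∈ ⋀[R]^(a + b) M :=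
  SetLike.mul_mem_graded hx hy


lemma Ctr_Ctr_ι_ι_mul (dB dA : Module.Dual R M) (a b : M) (x : ExteriorAlgebra R M) :
    Ctr dB (Ctr dA (ι R a * (ι R b * x))) =
      (dA a * dB b - dA b * dB a) • x
        - dA a • (ι R b * Ctr dB x) + dA b • (ι R a * Ctr dB x)
        + dB a • (ι R b * Ctr dA x) - dB b • (ι R a * Ctr dA x)
        + ι R a * (ι R b * Ctr dB (Ctr dA x)) := by
  simp only [Ctr_ι_mul, map_sub, map_smul, smul_sub, mul_sub, mul_smul_comm, smul_smul]
  module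

lemma ι_anticomm (a b : M) : ι R a * ι R b = - (ι R b * ι R a) := by
  rw [eq_neg_iff_add_eq_zero, ι_add_mul_swap]


lemma ι_mem (a : M) : ι R a ∈ ⋀[R]^1 M := by
  show ι R a ∈ (LinearMap.range (ι R : M →ₗ[R] ExteriorAlgebra R M)) ^ 1
  rw [pow_one]
  exact LinearMap.mem_range_self _ _


/-- value of `succAbove` -/
lemma val_succAbove {m : ℕ} (p : Fin (m + 1)) (i : Fin m) :
    ((p.succAbove i : Fin (m + 1)) : ℕ) =
      if (i : ℕ) < (p : ℕ) then (i : ℕ) else (i : ℕ) + 1 := by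
  rw [Fin.succAbove]
  split_ifs with h1 h2 h2
  · rfl
  · exact absurd (by exact_mod_cast h1) h2
  · exact absurd (by exact_mod_cast h2) h1
  · rfl

/-- the index swap for omitting two entries, in the case `q ≤ p` -/
lemma succAbove_swap {k : ℕ} (q : Fin (k + 2)) (p : Fin (k + 1)) (hq : (q : ℕ) ≤ (p : ℕ))
    (hqlt : (q : ℕ) < k + 1) (m : Fin k) :
    q.succAbove (p.succAbove m) = (p.succ).succAbove ((⟨(q : ℕ), hqlt⟩ : Fin (k + 1)).succAbove m) := by
  apply Fin.ext
  rw [val_succAbove, val_succAbove, val_succAbove, val_succAbove]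
  have h1 := p.isLt
  have h2 := m.isLt
  simp only [Fin.val_succ]
  split_ifs <;> omega

/-- reindexing a double sum over `(q, p)` as a sum over ordered pairs -/
lemma pair_reindex {W : Type*} [AddCommMonoid W] {k : ℕ}
    (H : Fin (k + 2) → Fin (k + 2) → W) (h0 : ∀ q, H q q = 0) :
    (∑ q : Fin (k + 2), ∑ p : Fin (k + 1), H q (q.succAbove p)) =
      ∑ i : Fin (k + 2), ∑ j : Fin (k + 2), if i < j then H i j + H j i else 0 := by
  have h1 : ∀ q : Fin (k + 2), (∑ p : Fin (k + 1), H q (q.succAbove p)) =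
      ∑ j : Fin (k + 2), H q j := by
    intro q
    rw [Fin.sum_univ_succAbove (fun j => H q j) q, h0 q, zero_add]
  rw [Finset.sum_congr rfl (fun q _ => h1 q)]
  have h2 : ∀ q j : Fin (k + 2), H q j =
      (if q < j then H q j else 0) + (if j < q then H q j else 0) := by
    intro q j
    rcases lt_trichotomy q j with h | h | h
    · rw [if_pos h, if_neg (asymm h), add_zero]
    · subst h; simp [h0 q]
    · rw [if_neg (asymm h), if_pos h, zero_add]
  calc ∑ q : Fin (k+2), ∑ j : Fin (k+2), H q j
      = ∑ q : Fin (k+2), ∑ j : Fin (k+2),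
          ((if q < j then H q j else 0) + (if j < q then H q j else 0)) := by
        exact Finset.sum_congr rfl fun q _ => Finset.sum_congr rfl fun j _ => h2 q j
    _ = (∑ q : Fin (k+2), ∑ j : Fin (k+2), (if q < j then H q j else 0)) +
          ∑ q : Fin (k+2), ∑ j : Fin (k+2), (if j < q then H q j else 0) := by
        rw [← Finset.sum_add_distrib]
        exact Finset.sum_congr rfl fun q _ => Finset.sum_add_distrib
    _ = (∑ i : Fin (k+2), ∑ j : Fin (k+2), (if i < j then H i j else 0)) +
          ∑ i : Fin (k+2), ∑ j : Fin (k+2), (if i < j then H j i else 0) := by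
        congr 1
        exact Finset.sum_comm
    _ = ∑ i : Fin (k+2), ∑ j : Fin (k+2),
          ((if i < j then H i j else 0) + (if i < j then H j i else 0)) := by
        rw [← Finset.sum_add_distrib]
        exact Finset.sum_congr rfl fun q _ => Finset.sum_add_distrib.symm
    _ = ∑ i : Fin (k+2), ∑ j : Fin (k+2), if i < j then H i j + H j i else 0 := by
        refine Finset.sum_congr rfl fun i _ => Finset.sum_congr rfl fun j _ => ?_
        split_ifs <;> simp



namespace Symp
variable (n : ℕ)

def idx1 (l : Fin n) : Fin (2 * n) := ⟨(l : ℕ), by have := l.isLt; omega⟩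
def idx2 (l : Fin n) : Fin (2 * n) := ⟨2 * n - 1 - (l : ℕ), by have := l.isLt; omega⟩

lemma idx1_lt (l : Fin n) : ((idx1 n l : Fin (2*n)) : ℕ) < n := l.isLt
lemma idx2_ge (l : Fin n) : n ≤ ((idx2 n l : Fin (2*n)) : ℕ) := by
  have := l.isLt; simp only [idx2]; omega

def E1 (l : Fin n) : Vsp n := Pi.single (idx1 n l) 1
def E2 (l : Fin n) : Vsp n := Pi.single (idx2 n l) 1

def dA (l : Fin n) : Module.Dual ℂ (Vsp n) := LinearMap.proj (idx1 n l)
def dB (l : Fin n) : Module.Dual ℂ (Vsp n) := LinearMap.proj (idx2 n l)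

lemma dA_E1 (l m : Fin n) : dA n l (E1 n m) = if m = l then 1 else 0 := by
  simp only [dA, E1, LinearMap.proj_apply, Function.eval, Pi.single_apply, idx1, Fin.mk.injEq]
  by_cases h : m = l
  · subst h; simp
  · rw [if_neg, if_neg h]
    intro hc
    exact h (Fin.ext hc.symm)
lemma dB_E2 (l m : Fin n) : dB n l (E2 n m) = if m = l then 1 else 0 := by
  have hl := l.isLt; have hm := m.isLt
  simp only [dB, E2, LinearMap.proj_apply, Function.eval, Pi.single_apply, idx2, Fin.mk.injEq]
  by_cases h : m = l
  · subst h; simp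
  · rw [if_neg, if_neg h]
    intro hc
    exact h (Fin.ext (by omega))
lemma dA_E2 (l m : Fin n) : dA n l (E2 n m) = 0 := by
  have hl := l.isLt; have hm := m.isLt
  simp only [dA, E2, LinearMap.proj_apply, Function.eval, Pi.single_apply, idx2, idx1,
    Fin.mk.injEq]
  rw [if_neg]; omega
lemma dB_E1 (l m : Fin n) : dB n l (E1 n m) = 0 := by
  have hl := l.isLt; have hm := m.isLt
  simp only [dB, E1, LinearMap.proj_apply, Function.eval, Pi.single_apply, idx2, idx1,
    Fin.mk.injEq]
  rw [if_neg]; omega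

/-- resolving a vector along the symplectic basis -/
lemma sum_single_eq (v : Vsp n) :
    ∑ l : Fin n, (dA n l v • E1 n l + dB n l v • E2 n l) = v := by
  funext j
  have hj := j.isLt
  simp only [Finset.sum_apply, Pi.add_apply, Pi.smul_apply, E1, E2, Pi.single_apply,
    smul_eq_mul]
  by_cases h : (j : ℕ) < n
  · rw [Finset.sum_eq_single (⟨(j : ℕ), h⟩ : Fin n)]
    · simp only [idx1, idx2, dA, LinearMap.proj_apply, Function.eval]
      have h1 : ¬ ((j : ℕ) = 2 * n - 1 - (j : ℕ)) := by omega
      simp [Fin.ext_iff, h1]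
    · intro l _ hl
      rw [if_neg, if_neg, mul_zero, mul_zero, add_zero]
      · intro hc; apply hl; apply Fin.ext
        simp only [idx2, Fin.ext_iff] at hc ⊢
        omega
      · intro hc; apply hl; apply Fin.ext
        simp only [idx1, Fin.ext_iff] at hc ⊢
        omega
    · intro h'; exact absurd (Finset.mem_univ _) h'
  · rw [Finset.sum_eq_single (⟨2 * n - 1 - (j : ℕ), by omega⟩ : Fin n)]
    · simp only [idx1, idx2, dB, LinearMap.proj_apply, Function.eval]
      have h1 : ¬ ((j : ℕ) = 2 * n - 1 - (j : ℕ)) := by omega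
      have h2 : 2 * n - 1 - (2 * n - 1 - (j : ℕ)) = (j : ℕ) := by omega
      simp [Fin.ext_iff, h1, h2]
    · intro l _ hl
      rw [if_neg, if_neg, mul_zero, mul_zero, add_zero]
      · intro hc; apply hl; apply Fin.ext
        simp only [idx2, Fin.ext_iff] at hc ⊢
        omega
      · intro hc; apply hl; apply Fin.ext
        simp only [idx1, Fin.ext_iff] at hc ⊢
        omega
    · intro h'; exact absurd (Finset.mem_univ _) h'


/-- the contraction operator `φ0`, on the full exterior algebra -/
def phi0 : ExteriorAlgebra ℂ (Vsp n) →ₗ[ℂ] ExteriorAlgebra ℂ (Vsp n) :=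
  ∑ l : Fin n, (Ctr (dB n l)) ∘ₗ (Ctr (dA n l))

/-- the symplectic bivector -/
def omg : ExteriorAlgebra ℂ (Vsp n) :=
  ∑ l : Fin n, ι ℂ (E1 n l) * ι ℂ (E2 n l)

/-- the number operator -/
def Nop : ExteriorAlgebra ℂ (Vsp n) →ₗ[ℂ] ExteriorAlgebra ℂ (Vsp n) :=
  ∑ l : Fin n,
    ((LinearMap.mulLeft ℂ (ι ℂ (E1 n l))) ∘ₗ (Ctr (dA n l)) +
      (LinearMap.mulLeft ℂ (ι ℂ (E2 n l))) ∘ₗ (Ctr (dB n l)))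

lemma Nop_ι_mul (v : Vsp n) (x : ExteriorAlgebra ℂ (Vsp n)) :
    Nop n (ι ℂ v * x) = ι ℂ v * x + ι ℂ v * Nop n x := by
  have key : ∀ (b : Vsp n) (d : Module.Dual ℂ (Vsp n)),
      ι ℂ b * Ctr d (ι ℂ v * x) = d v • (ι ℂ b * x) + ι ℂ v * (ι ℂ b * Ctr d x) := by
    intro b d
    rw [Ctr_ι_mul, mul_sub, mul_smul_comm, ← mul_assoc, ι_anticomm, neg_mul, mul_assoc,
      sub_neg_eq_add]
  simp only [Nop, LinearMap.sum_apply, LinearMap.add_apply, LinearMap.comp_apply,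
    LinearMap.mulLeft_apply, key]
  simp only [Finset.sum_add_distrib]
  rw [add_add_add_comm]
  congr 1
  · have hterm : ∀ l : Fin n,
        dA n l v • (ι ℂ (E1 n l) * x) + dB n l v • (ι ℂ (E2 n l) * x) =
          ι ℂ (dA n l v • E1 n l + dB n l v • E2 n l) * x := by
      intro l
      rw [map_add, map_smul, map_smul, add_mul, smul_mul_assoc, smul_mul_assoc]
    rw [← Finset.sum_add_distrib, Finset.sum_congr rfl (fun l _ => hterm l),
      ← Finset.sum_mul, ← map_sum, sum_single_eq]
  · rw [← Finset.sum_add_distrib]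
    simp only [← mul_add]
    rw [← Finset.mul_sum]
    congr 1
    exact Finset.sum_add_distrib
      (f := fun l : Fin n => ι ℂ (E1 n l) * Ctr (dA n l) x)
      (g := fun l : Fin n => ι ℂ (E2 n l) * Ctr (dB n l) x)


lemma Nop_one : Nop n (1 : ExteriorAlgebra ℂ (Vsp n)) = 0 := by
  simp [Nop, Ctr_one]

lemma Nop_ιMulti (m : ℕ) (v : Fin m → Vsp n) :
    Nop n (ιMulti ℂ m v) = (m : ℂ) • ιMulti ℂ m v := by
  induction m with
  | zero => rw [ιMulti_zero_apply, Nop_one]; simp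
  | succ m ih =>
      rw [ιMulti_succ_apply, Nop_ι_mul, ih _, mul_smul_comm, ← ιMulti_succ_apply]
      push_cast
      rw [add_smul, one_smul, add_comm]

lemma Nop_grade (m : ℕ) {x : ExteriorAlgebra ℂ (Vsp n)} (hx : x ∈ ⋀[ℂ]^m (Vsp n)) :
    Nop n x = (m : ℂ) • x := by
  rw [← ιMulti_span_fixedDegree] at hx
  induction hx using Submodule.span_induction with
  | mem y hy => obtain ⟨v, rfl⟩ := hy; exact Nop_ιMulti n m v
  | zero => simp
  | add y z _ _ hy hz => rw [map_add, hy, hz, smul_add]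
  | smul c y _ hy => rw [map_smul, hy, smul_comm]

/-- main commutator identity (pointwise form) -/
lemma comm1 (x : ExteriorAlgebra ℂ (Vsp n)) :
    phi0 n (omg n * x) = omg n * phi0 n x + (n : ℂ) • x - Nop n x := by
  have expand : omg n * x = ∑ l : Fin n, ι ℂ (E1 n l) * (ι ℂ (E2 n l) * x) := by
    rw [omg, Finset.sum_mul]
    simp only [mul_assoc]
  rw [expand, map_sum]
  simp only [phi0, LinearMap.sum_apply, LinearMap.comp_apply]
  -- double sum: outer over the φ-index m, inner over the ω-index l
  have hterm : ∀ (m l : Fin n),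
      Ctr (dB n m) (Ctr (dA n m) (ι ℂ (E1 n l) * (ι ℂ (E2 n l) * x))) =
        (if l = m then (1:ℂ) else 0) • x
          - (if l = m then (1:ℂ) else 0) • (ι ℂ (E2 n l) * Ctr (dB n m) x)
          - (if l = m then (1:ℂ) else 0) • (ι ℂ (E1 n l) * Ctr (dA n m) x)
          + ι ℂ (E1 n l) * (ι ℂ (E2 n l) * Ctr (dB n m) (Ctr (dA n m) x)) := by
    intro m l
    rw [Ctr_Ctr_ι_ι_mul, dA_E1, dA_E2, dB_E1, dB_E2]
    by_cases h : l = m <;> simp [h]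
  have step1 : ∀ l : Fin n,
      ∑ m : Fin n, Ctr (dB n m) (Ctr (dA n m) (ι ℂ (E1 n l) * (ι ℂ (E2 n l) * x))) =
        x - ι ℂ (E2 n l) * Ctr (dB n l) x - ι ℂ (E1 n l) * Ctr (dA n l) x
          + ι ℂ (E1 n l) * (ι ℂ (E2 n l) * phi0 n x) := by
    intro l
    rw [Finset.sum_congr rfl (fun m _ => hterm m l)]
    rw [Finset.sum_add_distrib, Finset.sum_sub_distrib, Finset.sum_sub_distrib]
    have c1 : ∑ m : Fin n, (if l = m then (1:ℂ) else 0) • x = x := by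
      rw [← Finset.sum_smul, Finset.sum_ite_eq, if_pos (Finset.mem_univ l), one_smul]
    have c2 : ∑ m : Fin n, (if l = m then (1:ℂ) else 0) • (ι ℂ (E2 n l) * Ctr (dB n m) x) =
        ι ℂ (E2 n l) * Ctr (dB n l) x := by
      rw [Finset.sum_eq_single l]
      · rw [if_pos rfl, one_smul]
      · intro m _ hm; rw [if_neg (Ne.symm hm), zero_smul]
      · intro h; exact absurd (Finset.mem_univ _) h
    have c3 : ∑ m : Fin n, (if l = m then (1:ℂ) else 0) • (ι ℂ (E1 n l) * Ctr (dA n m) x) =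
        ι ℂ (E1 n l) * Ctr (dA n l) x := by
      rw [Finset.sum_eq_single l]
      · rw [if_pos rfl, one_smul]
      · intro m _ hm; rw [if_neg (Ne.symm hm), zero_smul]
      · intro h; exact absurd (Finset.mem_univ _) h
    have c4 : ∑ m : Fin n, ι ℂ (E1 n l) * (ι ℂ (E2 n l) * Ctr (dB n m) (Ctr (dA n m) x)) =
        ι ℂ (E1 n l) * (ι ℂ (E2 n l) * phi0 n x) := by
      simp only [← Finset.mul_sum]
      congr 2
      simp [phi0]
    rw [c1, c2, c3, c4]
  rw [Finset.sum_congr rfl (fun l _ => step1 l)]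
  rw [Finset.sum_add_distrib, Finset.sum_sub_distrib, Finset.sum_sub_distrib]
  have d1 : ∑ _l : Fin n, x = (n : ℂ) • x := by
    rw [Finset.sum_const, Finset.card_univ, Fintype.card_fin, Nat.cast_smul_eq_nsmul]
  have d2 : (∑ l : Fin n, ι ℂ (E1 n l) * (ι ℂ (E2 n l) * phi0 n x)) = omg n * phi0 n x := by
    rw [omg, Finset.sum_mul]
    simp only [mul_assoc]
  have d3 : Nop n x = ∑ l : Fin n, (ι ℂ (E1 n l) * Ctr (dA n l) x + ι ℂ (E2 n l) * Ctr (dB n l) x) := by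
    simp [Nop]
  rw [d1, d2, d3, Finset.sum_add_distrib]
  simp only [phi0, LinearMap.sum_apply, LinearMap.comp_apply]
  abel


lemma omg_mem : omg n ∈ ⋀[ℂ]^2 (Vsp n) :=
  Submodule.sum_mem _ fun l _ => mul_mem_graded (ι_mem _) (ι_mem _)

lemma phi0_mem (m : ℕ) {x : ExteriorAlgebra ℂ (Vsp n)} (hx : x ∈ ⋀[ℂ]^(m + 2) (Vsp n)) :
    phi0 n x ∈ ⋀[ℂ]^m (Vsp n) := by
  simp only [phi0, LinearMap.sum_apply, LinearMap.comp_apply]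
  exact Submodule.sum_mem _ fun l _ => Ctr_mem _ m (Ctr_mem _ (m + 1) hx)

lemma phi0_zero_degree {x : ExteriorAlgebra ℂ (Vsp n)} (hx : x ∈ ⋀[ℂ]^0 (Vsp n)) :
    phi0 n x = 0 := by
  simp only [phi0, LinearMap.sum_apply, LinearMap.comp_apply]
  apply Finset.sum_eq_zero
  intro l _
  rw [Ctr_zero_degree _ hx, map_zero]

lemma phi0_one_degree {x : ExteriorAlgebra ℂ (Vsp n)} (hx : x ∈ ⋀[ℂ]^1 (Vsp n)) :
    phi0 n x = 0 := by
  simp only [phi0, LinearMap.sum_apply, LinearMap.comp_apply]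
  apply Finset.sum_eq_zero
  intro l _
  rw [Ctr_zero_degree _ (Ctr_mem _ 0 hx)]

lemma omg_pow_mul_mem (j m : ℕ) {x : ExteriorAlgebra ℂ (Vsp n)}
    (hx : x ∈ ⋀[ℂ]^m (Vsp n)) : omg n ^ j * x ∈ ⋀[ℂ]^(2 * j + m) (Vsp n) := by
  induction j with
  | zero => simpa using hx
  | succ j ih =>
      have : omg n ^ (j + 1) * x = omg n * (omg n ^ j * x) := by
        rw [pow_succ', mul_assoc]
      rw [this]
      have h2 := mul_mem_graded (omg_mem n) ih
      have : 2 + (2 * j + m) = 2 * (j + 1) + m := by ring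
      rwa [this] at h2

lemma SC (m : ℕ) {x : ExteriorAlgebra ℂ (Vsp n)} (hx : x ∈ ⋀[ℂ]^m (Vsp n)) :
    phi0 n (omg n * x) = omg n * phi0 n x + ((n : ℂ) - (m : ℂ)) • x := by
  rw [comm1, Nop_grade n m hx, sub_smul]
  abel

lemma IT (j : ℕ) : ∀ (m : ℕ) (x : ExteriorAlgebra ℂ (Vsp n)), x ∈ ⋀[ℂ]^m (Vsp n) →
    phi0 n (omg n ^ (j + 1) * x) =
      omg n ^ (j + 1) * phi0 n x +
        (((j : ℂ) + 1) * ((n : ℂ) - (m : ℂ) - (j : ℂ))) • (omg n ^ j * x) := by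
  induction j with
  | zero =>
      intro m x hx
      have := SC n m hx
      simpa using this
  | succ j ih =>
      intro m x hx
      have hx2 : omg n * x ∈ ⋀[ℂ]^(m + 2) (Vsp n) := by
        have := mul_mem_graded (omg_mem n) hx
        rwa [add_comm 2 m] at this
      have h1 : omg n ^ (j + 1 + 1) * x = omg n ^ (j + 1) * (omg n * x) := by
        rw [pow_succ, mul_assoc]
      have h2 : omg n ^ (j + 1) * x = omg n ^ j * (omg n * x) := by
        rw [pow_succ, mul_assoc]
      rw [h1, h2, ih (m + 2) (omg n * x) hx2, SC n m hx]
      rw [mul_add, mul_smul_comm, ← mul_assoc, ← pow_succ, h2]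
      rw [add_assoc, ← add_smul]
      congr 2
      push_cast
      ring

lemma cast_sub_ne (k j : ℕ) (hle : k + 2 * j + 2 ≤ n) :
    (((j:ℂ)+1) * ((n:ℂ) - (k:ℂ) - (j:ℂ))) ≠ 0 := by
  have hnat : n = k + j + (n - k - j) := by omega
  have hcast := congrArg (Nat.cast : ℕ → ℂ) hnat
  push_cast at hcast
  have hc2 : ((n:ℂ) - (k:ℂ) - (j:ℂ)) = ((n - k - j : ℕ) : ℂ) := by linear_combination hcast
  apply mul_ne_zero
  · exact Nat.cast_add_one_ne_zero j
  · rw [hc2]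
    exact_mod_cast (by omega : n - k - j ≠ 0)

lemma surj_aux : ∀ k : ℕ, ∀ j : ℕ, ∀ y ∈ ⋀[ℂ]^k (Vsp n), k + 2 * j + 2 ≤ n →
    ∃ x ∈ ⋀[ℂ]^(k + 2 * j + 2) (Vsp n), phi0 n x = omg n ^ j * y := by
  intro k
  induction k using Nat.strong_induction_on with
  | _ k ih =>
    intro j y hy hle
    have hIT := IT n j k y hy
    match k, hy, hle, hIT, ih with
    | 0, hy, hle, hIT, ih =>
      have hc := cast_sub_ne n 0 j hle
      refine ⟨(((j:ℂ)+1) * ((n:ℂ) - (0:ℕ) - (j:ℂ)))⁻¹ • (omg n ^ (j+1) * y), ?_, ?_⟩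
      · apply Submodule.smul_mem
        have h := omg_pow_mul_mem n (j+1) 0 hy
        have he : 2 * (j+1) + 0 = 0 + 2 * j + 2 := by omega
        rwa [he] at h
      · rw [map_smul, hIT, phi0_zero_degree n hy, mul_zero, zero_add, smul_smul,
          inv_mul_cancel₀ hc, one_smul]
    | 1, hy, hle, hIT, ih =>
      have hc := cast_sub_ne n 1 j hle
      refine ⟨(((j:ℂ)+1) * ((n:ℂ) - (1:ℕ) - (j:ℂ)))⁻¹ • (omg n ^ (j+1) * y), ?_, ?_⟩
      · apply Submodule.smul_mem
        have h := omg_pow_mul_mem n (j+1) 1 hy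
        have he : 2 * (j+1) + 1 = 1 + 2 * j + 2 := by omega
        rwa [he] at h
      · rw [map_smul, hIT, phi0_one_degree n hy, mul_zero, zero_add, smul_smul,
          inv_mul_cancel₀ hc, one_smul]
    | (k''+2), hy, hle, hIT, ih =>
      have hc := cast_sub_ne n (k''+2) j hle
      have hy2 : phi0 n y ∈ ⋀[ℂ]^k'' (Vsp n) := phi0_mem n k'' hy
      obtain ⟨z, hz, hphz⟩ := ih k'' (by omega) (j+1) (phi0 n y) hy2 (by omega)
      refine ⟨(((j:ℂ)+1) * ((n:ℂ) - ((k''+2:ℕ):ℂ) - (j:ℂ)))⁻¹ • (omg n ^ (j+1) * y - z), ?_, ?_⟩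
      · apply Submodule.smul_mem
        apply Submodule.sub_mem
        · have h := omg_pow_mul_mem n (j+1) (k''+2) hy
          have he : 2 * (j+1) + (k''+2) = k''+2 + 2 * j + 2 := by omega
          rwa [he] at h
        · have he : k'' + 2 * (j+1) + 2 = k''+2 + 2 * j + 2 := by omega
          rwa [he] at hz
      · rw [map_smul, map_sub, hIT, hphz, add_sub_cancel_left, smul_smul,
          inv_mul_cancel₀ hc, one_smul]

variable {n}
variable {k : ℕ} (v : Fin (k + 2) → Vsp n)

def Haux (l : Fin n) (q j : Fin (k + 2)) : ExteriorAlgebra ℂ (Vsp n) :=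
  if h : q < j then
    ((-1 : ℂ) ^ ((q : ℕ) + (j : ℕ) + 1) * (dA n l (v q) * dB n l (v j))) •
      ιMulti ℂ k (omit2 v q j h)
  else if h' : j < q then
    ((-1 : ℂ) ^ ((q : ℕ) + (j : ℕ)) * (dA n l (v q) * dB n l (v j))) •
      ιMulti ℂ k (omit2 v j q h')
  else 0

lemma Haux_diag (l : Fin n) (q : Fin (k + 2)) : Haux v l q q = 0 := by
  rw [Haux, dif_neg (lt_irrefl _), dif_neg (lt_irrefl _)]

lemma Haux_eq (l : Fin n) (q : Fin (k + 2)) (p : Fin (k + 1)) :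
    ((-1 : ℂ) ^ ((q : ℕ) + (p : ℕ)) * (dA n l (v q) * dB n l (v (q.succAbove p)))) •
        ιMulti ℂ k ((v ∘ q.succAbove) ∘ p.succAbove) = Haux v l q (q.succAbove p) := by
  by_cases hlt : (p : ℕ) < (q : ℕ)
  · have hcs : p.castSucc < q := by rw [Fin.lt_def]; exact_mod_cast hlt
    have hsa : q.succAbove p = p.castSucc := Fin.succAbove_of_castSucc_lt q p hcs
    rw [hsa, Haux, dif_neg (asymm hcs), dif_pos hcs]
    rfl
  · push_neg at hlt
    have hle : q ≤ p.castSucc := by rw [Fin.le_def]; exact_mod_cast hlt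
    have hsa : q.succAbove p = p.succ := Fin.succAbove_of_le_castSucc q p hle
    have hql : (q : ℕ) < k + 1 := lt_of_le_of_lt hlt p.isLt
    have hqs : q < p.succ := by rw [Fin.lt_def, Fin.val_succ]; omega
    rw [hsa, Haux, dif_pos hqs]
    congr 1
    · rw [Fin.val_succ, show (q : ℕ) + ((p : ℕ) + 1) + 1 = (q : ℕ) + (p : ℕ) + 2 from by omega]
      have hp : ((-1 : ℂ)) ^ ((q : ℕ) + (p : ℕ) + 2) = (-1) ^ (q : ℕ) * (-1) ^ (p : ℕ) := by
        rw [show (q : ℕ) + (p : ℕ) + 2 = (q : ℕ) + ((p : ℕ) + 2) from by omega, pow_add, pow_add,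
          neg_one_sq, mul_one]
      rw [hp, pow_add]
    · exact congrArg _ (funext fun m => congrArg v (succAbove_swap q p hlt hql m))

variable (n)

lemma phi0_ιMulti (v : Fin (k + 2) → Vsp n) :
    phi0 n (ιMulti ℂ (k + 2) v) =
      ∑ i : Fin (k + 2), ∑ j : Fin (k + 2),
        if hij : i < j then
          ((-1 : ℂ) ^ ((i : ℕ) + (j : ℕ) + 1) * OmegaForm n (v i) (v j)) •
            ιMulti ℂ k (omit2 v i j hij)
        else 0 := by
  simp only [phi0, LinearMap.sum_apply, LinearMap.comp_apply]
  have step_l : ∀ l : Fin n, Ctr (dB n l) (Ctr (dA n l) (ιMulti ℂ (k + 2) v)) =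
      ∑ q : Fin (k + 2), ∑ p : Fin (k + 1), Haux v l q (q.succAbove p) := by
    intro l
    rw [Ctr_ιMulti (dA n l) (k + 1) v, map_sum]
    refine Finset.sum_congr rfl fun q _ => ?_
    rw [map_smul, Ctr_ιMulti (dB n l) k (v ∘ q.succAbove), Finset.smul_sum]
    refine Finset.sum_congr rfl fun p _ => ?_
    rw [smul_smul, ← Haux_eq v l q p]
    congr 1
    rw [pow_add]
    simp only [Function.comp_apply]
    ring
  rw [Finset.sum_congr rfl fun l _ => step_l l]
  rw [Finset.sum_congr rfl fun l (_ : l ∈ Finset.univ) =>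
    pair_reindex (Haux v l) (Haux_diag v l)]
  rw [Finset.sum_comm]
  refine Finset.sum_congr rfl fun i _ => ?_
  rw [Finset.sum_comm]
  refine Finset.sum_congr rfl fun j _ => ?_
  by_cases hij : i < j
  · simp only [if_pos hij]
    rw [dif_pos hij]
    have e1 : ∀ l : Fin n, Haux v l i j =
        ((-1 : ℂ) ^ ((i : ℕ) + (j : ℕ) + 1) * (dA n l (v i) * dB n l (v j))) •
          ιMulti ℂ k (omit2 v i j hij) := fun l => by rw [Haux, dif_pos hij]
    have e2 : ∀ l : Fin n, Haux v l j i =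
        ((-1 : ℂ) ^ ((j : ℕ) + (i : ℕ)) * (dA n l (v j) * dB n l (v i))) •
          ιMulti ℂ k (omit2 v i j hij) := fun l => by
      rw [Haux, dif_neg (asymm hij), dif_pos hij]
    simp only [e1, e2, ← add_smul]
    rw [← Finset.sum_smul]
    congr 1
    simp only [OmegaForm]
    rw [Finset.mul_sum]
    refine Finset.sum_congr rfl fun l _ => ?_
    simp only [dA, dB, LinearMap.proj_apply, Function.eval, idx1, idx2]
    have : (j : ℕ) + (i : ℕ) = (i : ℕ) + (j : ℕ) := by omega
    rw [this, pow_succ]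
    ring
  · simp only [if_neg hij, dif_neg hij, Finset.sum_const_zero]


end Symp
end SympAux

open ExteriorAlgebra in
/-- The contraction
`φ(v_1 ∧ ⋯ ∧ v_{k+2}) = Σ_{i<j} Ω(v_i,v_j) (-1)^{i+j-1} v_1 ∧ ⋯ v̂_i ⋯ v̂_j ⋯ ∧ v_{k+2}`
is a well-defined surjective linear map `Λ^{k+2}(ℂ^{2n}) → Λ^{k}(ℂ^{2n})` when `k + 2 ≤ n`
(the sign `(-1)^{i+j-1}` for `1`-based indices `i,j` becomes `(-1)^{i+j+1}` in `0`-based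
indexing). -/
theorem symplectic_contraction_surjective (n k : ℕ) (hk : k + 2 ≤ n) :
    ∃ φ : (⋀[ℂ]^(k + 2) (Vsp n)) →ₗ[ℂ] (⋀[ℂ]^k (Vsp n)),
      (∀ (v : Fin (k + 2) → Vsp n) (x : ⋀[ℂ]^(k + 2) (Vsp n)),
          (x : ExteriorAlgebra ℂ (Vsp n)) = ιMulti ℂ (k + 2) v →
          ((φ x : ⋀[ℂ]^k (Vsp n)) : ExteriorAlgebra ℂ (Vsp n)) =
            ∑ i : Fin (k + 2), ∑ j : Fin (k + 2),
              if hij : i < j then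
                ((-1 : ℂ) ^ ((i : ℕ) + (j : ℕ) + 1) * OmegaForm n (v i) (v j)) •
                  ιMulti ℂ k (omit2 v i j hij)
              else 0) ∧
      Function.Surjective φ := by
  refine ⟨(Symp.phi0 n).restrict (fun x hx => Symp.phi0_mem n k hx), ?_, ?_⟩
  · intro v x hx
    have hco : (((Symp.phi0 n).restrict (fun x hx => Symp.phi0_mem n k hx) x :
        ⋀[ℂ]^k (Vsp n)) : ExteriorAlgebra ℂ (Vsp n)) = Symp.phi0 n (x : ExteriorAlgebra ℂ (Vsp n)) := rfl
    rw [hco, hx, Symp.phi0_ιMulti]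
  · rintro ⟨y, hy⟩
    obtain ⟨x, hxmem, hxeq⟩ := Symp.surj_aux n k 0 y hy (by omega)
    rw [pow_zero, one_mul] at hxeq
    have hxmem' : x ∈ ⋀[ℂ]^(k + 2) (Vsp n) := by
      have h20 : k + 2 * 0 + 2 = k + 2 := by omega
      rwa [h20] at hxmem
    exact ⟨⟨x, hxmem'⟩, Subtype.ext hxeq⟩


end
end

section
/- The dimension of the kernel of the contraction map φ_k : Λ^k(C^{2n}) → Λ^{k-2}(C^{2n}) equals C(2n,k) − C(2n,k−2) for 2 ≤ k ≤ n, where C(m,r) denotes the binomial coefficient. -/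
/-!
The kernel of the symplectic contraction `φ : Λ^{k+2}(ℂ^{2n}) → Λ^{k}(ℂ^{2n})` has dimension
`C(2n, k+2) − C(2n, k)` for `k + 2 ≤ n`.
-/

noncomputable section

open ExteriorAlgebra

section Part1

variable (N m : ℕ)

/-- standard basis vector -/
def Eb (N : ℕ) (p : Fin N) : Fin N → ℂ := Pi.single p 1

lemma Eb_injective (N : ℕ) : Function.Injective (Eb N) := by
  intro p q h
  by_contra hpq
  have := congrFun h p
  simp [Eb, Pi.single_apply, hpq] at this

def wedgeFam (S : {s : Finset (Fin N) // s.card = m}) : ExteriorAlgebra ℂ (Fin N → ℂ) :=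
  ιMulti ℂ m (fun i => Eb N (S.1.orderIsoOfFin S.2 i))

def detFun (S : Finset (Fin N)) (hS : S.card = m) :
    (Fin N → ℂ) [⋀^Fin m]→ₗ[ℂ] ℂ :=
  (Matrix.detRowAlternating).compLinearMap (LinearMap.funLeft ℂ ℂ (fun j => S.orderIsoOfFin hS j))

lemma detFun_apply (S : Finset (Fin N)) (hS : S.card = m) (v : Fin m → (Fin N → ℂ)) :
    detFun N m S hS v = Matrix.det (Matrix.of fun i j => v i (S.orderIsoOfFin hS j)) := rfl

lemma detFun_fam (S₀ : Finset (Fin N)) (hS₀ : S₀.card = m) (S : {s : Finset (Fin N) // s.card = m}) :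
    detFun N m S₀ hS₀ (fun i => Eb N (S.1.orderIsoOfFin S.2 i)) = if S.1 = S₀ then 1 else 0 := by
  rw [detFun_apply]
  split_ifs with h
  · subst h
    have : (Matrix.of fun i j => Eb N (S.1.orderIsoOfFin S.2 i) (S.1.orderIsoOfFin hS₀ j)) = 1 := by
      ext i j
      simp only [Matrix.of_apply, Eb, Pi.single_apply, Matrix.one_apply]
      by_cases hij : i = j
      · subst hij; simp
      · rw [if_neg (fun hc => hij (((S.1.orderIsoOfFin hS₀).injective (Subtype.ext hc)).symm)),
          if_neg hij]
    rw [this, Matrix.det_one]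
  · -- some row is zero
    obtain ⟨x, hxS, hxS₀⟩ : ∃ x ∈ S.1, x ∉ S₀ := by
      by_contra hc
      push_neg at hc
      exact h (Finset.eq_of_subset_of_card_le hc (by rw [hS₀, S.2]))
    obtain ⟨i₀, hi₀⟩ : ∃ i₀, (S.1.orderIsoOfFin S.2 i₀ : Fin N) = x :=
      ⟨(S.1.orderIsoOfFin S.2).symm ⟨x, hxS⟩, by simp⟩
    apply Matrix.det_eq_zero_of_row_eq_zero i₀
    intro j
    simp only [Matrix.of_apply, Eb, Pi.single_apply, hi₀]
    rw [if_neg]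
    intro hc
    exact hxS₀ (hc ▸ (S₀.orderIsoOfFin hS₀ j).2)

def lamS (S : Finset (Fin N)) (hS : S.card = m) : ExteriorAlgebra ℂ (Fin N → ℂ) →ₗ[ℂ] ℂ :=
  liftAlternating (Function.update 0 m (detFun N m S hS))

lemma lamS_ιMulti (S : Finset (Fin N)) (hS : S.card = m) (v : Fin m → (Fin N → ℂ)) :
    lamS N m S hS (ιMulti ℂ m v) = detFun N m S hS v := by
  rw [lamS, liftAlternating_apply_ιMulti, Function.update_self]

lemma wedgeFam_indep : LinearIndependent ℂ (wedgeFam N m) := by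
  rw [Fintype.linearIndependent_iff]
  intro g hg S₀
  have := congrArg (lamS N m S₀.1 S₀.2) hg
  rw [map_sum, map_zero] at this
  simp only [map_smul, wedgeFam, lamS_ιMulti, detFun_fam, smul_eq_mul] at this
  rw [Finset.sum_eq_single S₀] at this
  · simpa using this
  · intro S _ hne
    rw [if_neg (fun hc => hne (Subtype.ext hc)), mul_zero]
  · intro h; exact absurd (Finset.mem_univ _) h

lemma ιMulti_mem_span (v : Fin m → (Fin N → ℂ)) :
    ιMulti ℂ m v ∈ Submodule.span ℂ (Set.range (wedgeFam N m)) := by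
  have hv : ∀ i, v i = ∑ j, v i j • Eb N j := by
    intro i; ext j'
    simp [Eb, Pi.single_apply, Finset.sum_apply, mul_ite]
  have h1 : ιMulti ℂ m v = (ιMulti ℂ m).toMultilinearMap (fun i => ∑ j, v i j • Eb N j) := by
    show ιMulti ℂ m v = ιMulti ℂ m (fun i => ∑ j, v i j • Eb N j)
    exact congrArg _ (funext hv)
  rw [h1, MultilinearMap.map_sum]
  apply Submodule.sum_mem
  intro F _
  rw [MultilinearMap.map_smul_univ]
  apply Submodule.smul_mem
  by_cases hF : Function.Injective F
  · -- range F is a finset of card m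
    have hcard : (Finset.univ.image F).card = m := by
      rw [Finset.card_image_of_injective _ hF, Finset.card_univ, Fintype.card_fin]
    set S : {s : Finset (Fin N) // s.card = m} := ⟨Finset.univ.image F, hcard⟩ with hSdef
    have hmem : ∀ i, F i ∈ S.1 := fun i => Finset.mem_image_of_mem F (Finset.mem_univ i)
    set τ : Fin m → Fin m := fun i => (S.1.orderIsoOfFin S.2).symm ⟨F i, hmem i⟩ with hτ
    have hτval : ∀ i, ((S.1.orderIsoOfFin S.2) (τ i) : Fin N) = F i := by
      intro i; simp [hτ]
    have hτinj : Function.Injective τ := by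
      intro a b hab
      apply hF
      rw [← hτval a, ← hτval b, hab]
    have hτbij := (Finite.injective_iff_bijective).1 hτinj
    set σ : Equiv.Perm (Fin m) := Equiv.ofBijective τ hτbij with hσ
    have hcomp : (fun i => Eb N (F i)) = (fun i => Eb N (S.1.orderIsoOfFin S.2 i)) ∘ σ := by
      funext i
      simp only [Function.comp_apply, hσ, Equiv.ofBijective_apply, hτval i]
    have hperm := AlternatingMap.map_perm (ιMulti ℂ m (M := Fin N → ℂ))
      (fun i => Eb N (S.1.orderIsoOfFin S.2 i)) σ
    rw [← hcomp] at hperm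
    show (ιMulti ℂ m fun i => Eb N (F i)) ∈ Submodule.span ℂ (Set.range (wedgeFam N m))
    rw [hperm]
    have hmem' : wedgeFam N m S ∈ Submodule.span ℂ (Set.range (wedgeFam N m)) :=
      Submodule.subset_span ⟨S, rfl⟩
    rw [Units.smul_def]
    exact Submodule.smul_of_tower_mem _ _ hmem'
  · show (ιMulti ℂ m fun i => Eb N (F i)) ∈ Submodule.span ℂ (Set.range (wedgeFam N m))
    have hz := (ιMulti ℂ m (M := Fin N → ℂ)).map_eq_zero_of_not_injective
      (fun i => Eb N (F i)) (fun h => hF (fun a b hab => h (congrArg (Eb N) hab)))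
    rw [hz]
    exact Submodule.zero_mem _

lemma span_wedgeFam : Submodule.span ℂ (Set.range (wedgeFam N m)) = ⋀[ℂ]^m (Fin N → ℂ) := by
  apply le_antisymm
  · rw [Submodule.span_le]
    rintro _ ⟨S, rfl⟩
    exact ιMulti_range ℂ m ⟨_, rfl⟩
  · rw [← ιMulti_span_fixedDegree, Submodule.span_le]
    rintro _ ⟨v, rfl⟩
    exact ιMulti_mem_span N m v

def wedgeB (S : {s : Finset (Fin N) // s.card = m}) : (⋀[ℂ]^m (Fin N → ℂ) : Submodule ℂ _) :=
  ⟨wedgeFam N m S, by rw [← span_wedgeFam]; exact Submodule.subset_span ⟨S, rfl⟩⟩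

def wedgeBasis : Module.Basis {s : Finset (Fin N) // s.card = m} ℂ (⋀[ℂ]^m (Fin N → ℂ)) := by
  apply Module.Basis.mk (v := wedgeB N m)
  · apply LinearIndependent.of_comp ((⋀[ℂ]^m (Fin N → ℂ)).subtype)
    exact wedgeFam_indep N m
  · rw [← Submodule.map_le_map_iff_of_injective
      (Submodule.injective_subtype (⋀[ℂ]^m (Fin N → ℂ)))]
    rw [Submodule.map_span, Submodule.map_top, Submodule.range_subtype]
    rw [← Set.range_comp]
    have : ((⋀[ℂ]^m (Fin N → ℂ)).subtype) ∘ (wedgeB N m) = wedgeFam N m := rfl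
    rw [this, span_wedgeFam]

lemma finrank_wedge : Module.finrank ℂ (⋀[ℂ]^m (Fin N → ℂ)) = N.choose m := by
  rw [Module.finrank_eq_card_basis (wedgeBasis N m), Fintype.card_finset_len,
    Fintype.card_fin]

instance : FiniteDimensional ℂ (⋀[ℂ]^m (Fin N → ℂ)) :=
  Module.Finite.of_basis (wedgeBasis N m)

end Part1

section Part5

variable {α : Type*} [DecidableEq α]

def upF (z : Finset α → ℂ) (Q : Finset α) : ℂ := ∑ b ∈ Q, z (Q.erase b)

def downF (F : Finset α) (z : Finset α → ℂ) (P : Finset α) : ℂ :=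
  ∑ a ∈ F \ P, z (insert a P)

lemma up_down_identity (F : Finset α) (z : Finset α → ℂ) (P : Finset α) (hP : P ⊆ F) :
    downF F (upF z) P + (P.card : ℂ) * z P
      = upF (downF F z) P + ((F \ P).card : ℂ) * z P := by
  have h1 : downF F (upF z) P
      = ((F \ P).card : ℂ) * z P + ∑ a ∈ F \ P, ∑ b ∈ P, z (insert a (P.erase b)) := by
    unfold downF upF
    have : ∀ a ∈ F \ P, ∑ b ∈ insert a P, z ((insert a P).erase b)
        = z P + ∑ b ∈ P, z (insert a (P.erase b)) := by
      intro a ha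
      have haP : a ∉ P := (Finset.mem_sdiff.1 ha).2
      rw [Finset.sum_insert haP, Finset.erase_insert haP]
      congr 1
      apply Finset.sum_congr rfl
      intro b hb
      rw [Finset.erase_insert_of_ne (fun hc => haP (by rw [hc]; exact hb))]
    rw [Finset.sum_congr rfl this, Finset.sum_add_distrib, Finset.sum_const, nsmul_eq_mul]
  have h2 : upF (downF F z) P
      = (P.card : ℂ) * z P + ∑ a ∈ F \ P, ∑ b ∈ P, z (insert a (P.erase b)) := by
    unfold downF upF
    have : ∀ b ∈ P, ∑ a ∈ F \ P.erase b, z (insert a (P.erase b))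
        = z P + ∑ a ∈ F \ P, z (insert a (P.erase b)) := by
      intro b hb
      rw [Finset.sdiff_erase (hP hb), Finset.sum_insert (fun hc => (Finset.mem_sdiff.1 hc).2 hb),
        Finset.insert_erase hb]
    rw [Finset.sum_congr rfl this, Finset.sum_add_distrib, Finset.sum_const, nsmul_eq_mul,
      Finset.sum_comm]
  rw [h1, h2]; ring

/-- iterated down -/
def downIter (F : Finset α) (z : Finset α → ℂ) : ℕ → (Finset α → ℂ)
  | 0 => z
  | j + 1 => downF F (downIter F z j)

lemma comb_claim (F : Finset α) (q : ℕ) (z : Finset α → ℂ)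
    (hF : 2 * q + 2 ≤ F.card)
    (hrel : ∀ Q ⊆ F, Q.card = q + 1 → upF z Q = 0) :
    ∀ j : ℕ, j ≤ q → ∀ P ⊆ F, P.card = q - j →
      upF (downIter F z (j + 1)) P
        = -(((j + 1) * (F.card - 2 * q) + j * (j + 1) : ℕ) : ℂ) * downIter F z j P := by
  intro j
  induction j with
  | zero =>
    intro _ P hPF hPcard
    norm_num at hPcard
    have hid := up_down_identity F z P hPF
    have hdu : downF F (upF z) P = 0 := by
      unfold downF
      apply Finset.sum_eq_zero
      intro a ha
      apply hrel _ (Finset.insert_subset (Finset.mem_sdiff.1 ha).1 hPF)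
      rw [Finset.card_insert_of_notMem (Finset.mem_sdiff.1 ha).2, hPcard]
    have hcard : ((F \ P).card : ℂ) = ((F.card - 2*q : ℕ) : ℂ) + (P.card : ℂ) := by
      rw [Finset.card_sdiff_of_subset hPF, hPcard]
      have h2 : 2*q ≤ F.card := by omega
      have h3 : q ≤ F.card := by omega
      push_cast [Nat.cast_sub h2, Nat.cast_sub h3]
      ring
    rw [hdu, hcard] at hid
    have hco : (0+1) * (F.card - 2 * q) + 0 * (0+1) = F.card - 2*q := by ring_nf
    show upF (downIter F z (0+1)) P = _
    simp only [downIter, hco]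
    linear_combination -hid
  | succ j ih =>
    intro hj P hPF hPcard
    have hid := up_down_identity F (downIter F z (j + 1)) P hPF
    have hdu : downF F (upF (downIter F z (j + 1))) P
        = -(((j + 1) * (F.card - 2 * q) + j * (j + 1) : ℕ) : ℂ) * downIter F z (j + 1) P := by
      unfold downF
      have hterm : ∀ a ∈ F \ P, upF (downIter F z (j + 1)) (insert a P)
          = -(((j + 1) * (F.card - 2 * q) + j * (j + 1) : ℕ) : ℂ)
              * downIter F z j (insert a P) := by
        intro a ha
        apply ih (by omega) _ (Finset.insert_subset (Finset.mem_sdiff.1 ha).1 hPF)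
        rw [Finset.card_insert_of_notMem (Finset.mem_sdiff.1 ha).2, hPcard]
        omega
      rw [Finset.sum_congr rfl hterm, ← Finset.mul_sum]
      rfl
    rw [hdu] at hid
    have h1 : (j+1) ≤ q := by omega
    have h2 : 2*q ≤ F.card := by omega
    have h3 : q - (j+1) ≤ F.card := by omega
    have hcoef : (((j + 1 + 1) * (F.card - 2 * q) + (j+1) * (j + 1 + 1) : ℕ) : ℂ)
        = (((j + 1) * (F.card - 2 * q) + j * (j + 1) : ℕ) : ℂ)
          - (P.card : ℂ) + ((F \ P).card : ℂ) := by
      rw [hPcard, Finset.card_sdiff_of_subset hPF, hPcard]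
      push_cast [Nat.cast_sub h1, Nat.cast_sub h2, Nat.cast_sub h3]
      ring
    show upF (downF F (downIter F z (j+1))) P = _
    linear_combination -hid + downIter F z (j+1) P * hcoef

lemma combLemma (F : Finset α) (q : ℕ) (z : Finset α → ℂ)
    (hF : 2 * q + 2 ≤ F.card)
    (hrel : ∀ Q ⊆ F, Q.card = q + 1 → ∑ a ∈ Q, z (Q.erase a) = 0) :
    ∀ P ⊆ F, P.card = q → z P = 0 := by
  have hrel' : ∀ Q ⊆ F, Q.card = q + 1 → upF z Q = 0 := hrel
  have key := comb_claim F q z hF hrel'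
  -- downward induction: D j : ∀ P ⊆ F, card = q - j → downIter z j P = 0, provided j ≤ q
  have D : ∀ i : ℕ, ∀ j : ℕ, j ≤ q → q - j ≤ i → ∀ P ⊆ F, P.card = q - j →
      downIter F z j P = 0 := by
    intro i
    induction i with
    | zero =>
      intro j hj hqj P hPF hPcard
      -- P.card = 0, q - j = 0, so j = q (not nec, but q - j = 0)
      have hc := key j hj P hPF hPcard
      have hup : upF (downIter F z (j+1)) P = 0 := by
        unfold upF
        apply Finset.sum_eq_zero
        intro b hb
        exact absurd hb (by simp [Finset.card_eq_zero.1 (by omega : P.card = 0)])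
      rw [hup] at hc
      have hcoef : (((j + 1) * (F.card - 2 * q) + j * (j + 1) : ℕ) : ℂ) ≠ 0 := by
        rw [Nat.cast_ne_zero]
        have : F.card - 2*q ≥ 2 := by omega
        positivity
      have := hc.symm
      rw [neg_mul, neg_eq_zero] at this
      exact (mul_eq_zero.1 this).resolve_left hcoef
    | succ i ihi =>
      intro j hj hqj P hPF hPcard
      by_cases hqi : q - j ≤ i
      · exact ihi j hj hqi P hPF hPcard
      · -- q - j = i + 1 > 0, so j < q
        have hjq : j < q := by omega
        have hc := key j hj P hPF hPcard
        have hup : upF (downIter F z (j+1)) P = 0 := by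
          unfold upF
          apply Finset.sum_eq_zero
          intro b hb
          apply ihi (j+1) (by omega) (by omega) _ (fun x hx => hPF (Finset.erase_subset _ _ hx))
          rw [Finset.card_erase_of_mem hb, hPcard]
          omega
        rw [hup] at hc
        have hcoef : (((j + 1) * (F.card - 2 * q) + j * (j + 1) : ℕ) : ℂ) ≠ 0 := by
          rw [Nat.cast_ne_zero]
          have : F.card - 2*q ≥ 2 := by omega
          positivity
        have := hc.symm
        rw [neg_mul, neg_eq_zero] at this
        exact (mul_eq_zero.1 this).resolve_left hcoef
  intro P hPF hPcard
  have := D q 0 (by omega) (by omega) P hPF (by omega)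
  simpa [downIter] using this

end Part5

section Part2

variable {n : ℕ}

def barF (x : Fin (2*n)) : Fin (2*n) := ⟨2*n - 1 - (x:ℕ), by have := x.isLt; omega⟩

def embF (a : Fin n) : Fin (2*n) := ⟨(a:ℕ), by have := a.isLt; omega⟩

lemma barF_barF (x : Fin (2*n)) : barF (barF x) = x := by
  simp only [barF]; ext; simp; omega

lemma barF_val (x : Fin (2*n)) : (barF x : ℕ) = 2*n - 1 - (x:ℕ) := rfl

lemma embF_val (a : Fin n) : (embF a : ℕ) = (a:ℕ) := rfl

lemma barF_inj : Function.Injective (barF (n := n)) := by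
  intro a b h
  have := congrArg barF h
  rwa [barF_barF, barF_barF] at this

lemma embF_inj : Function.Injective (embF (n := n)) := by
  intro a b h
  ext
  exact congrArg (Fin.val : Fin (2*n) → ℕ) h

lemma barF_embF_val (a : Fin n) : ((barF (embF a)) : ℕ) = 2*n - 1 - (a:ℕ) := rfl

lemma barF_embF_ge (a : Fin n) : n ≤ ((barF (embF a)) : ℕ) := by
  have := a.isLt; simp [barF_embF_val]; omega

-- Omega on basis vectors
lemma Omega_basis (p q : Fin (2*n)) :
    OmegaForm n (Eb (2*n) p) (Eb (2*n) q) =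
      (if (p:ℕ) < n ∧ (q:ℕ) = 2*n - 1 - (p:ℕ) then 1 else 0)
        - (if (q:ℕ) < n ∧ (p:ℕ) = 2*n - 1 - (q:ℕ) then 1 else 0) := by
  unfold OmegaForm
  simp only [Eb, Pi.single_apply, Fin.ext_iff]
  rw [Finset.sum_sub_distrib]
  congr 1
  · by_cases hp : (p:ℕ) < n ∧ (q:ℕ) = 2*n-1-(p:ℕ)
    · rw [if_pos hp]
      rw [Finset.sum_eq_single_of_mem (⟨(p:ℕ), hp.1⟩ : Fin n) (Finset.mem_univ _)]
      · rw [if_pos (by simp), if_pos (by simp; omega), mul_one]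
      · intro i _ hi
        exact mul_eq_zero_of_left (if_neg (fun hc => hi (Fin.ext (by simpa using hc)))) _
    · rw [if_neg hp]
      apply Finset.sum_eq_zero
      intro i _
      rcases eq_or_ne (i:ℕ) (p:ℕ) with h1 | h1
      · exact mul_eq_zero_of_right _ (if_neg (fun hc => hp ⟨h1 ▸ i.isLt, by omega⟩))
      · exact mul_eq_zero_of_left (if_neg h1) _
  · by_cases hq : (q:ℕ) < n ∧ (p:ℕ) = 2*n-1-(q:ℕ)
    · rw [if_pos hq]
      rw [Finset.sum_eq_single_of_mem (⟨(q:ℕ), hq.1⟩ : Fin n) (Finset.mem_univ _)]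
      · rw [if_pos (by simp; omega), if_pos (by simp), mul_one]
      · intro i _ hi
        exact mul_eq_zero_of_right _ (if_neg (fun hc => hi (Fin.ext (by simpa using hc))))
    · rw [if_neg hq]
      apply Finset.sum_eq_zero
      intro i _
      rcases eq_or_ne (i:ℕ) (q:ℕ) with h1 | h1
      · exact mul_eq_zero_of_left (if_neg (fun hc => hq ⟨h1 ▸ i.isLt, by omega⟩)) _
      · exact mul_eq_zero_of_right _ (if_neg h1)


section lists
variable (hn : 0 < n) (Q : Finset (Fin n)) (N' : Finset (Fin (2*n)))

def Hfun (i : ℕ) : Fin (2*n) :=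
  if h : i < 2 * Q.card then
    (if i % 2 = 0 then embF (Q.orderEmbOfFin rfl ⟨i/2, by omega⟩)
     else barF (embF (Q.orderEmbOfFin rfl ⟨i/2, by omega⟩)))
  else if h2 : i - 2*Q.card < N'.card then N'.orderEmbOfFin rfl ⟨i - 2*Q.card, h2⟩
  else ⟨0, by omega⟩

lemma Hfun_cases (i : ℕ) (hi : i < 2*Q.card + N'.card) :
    (∃ t : Fin Q.card, i = 2*(t:ℕ) ∧ Hfun hn Q N' i = embF (Q.orderEmbOfFin rfl t)) ∨
    (∃ t : Fin Q.card, i = 2*(t:ℕ)+1 ∧ Hfun hn Q N' i = barF (embF (Q.orderEmbOfFin rfl t))) ∨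
    (2*Q.card ≤ i ∧ Hfun hn Q N' i ∈ N') := by
  by_cases h : i < 2 * Q.card
  · rcases Nat.even_or_odd i with he | ho
    · left
      refine ⟨⟨i/2, by omega⟩, ?_, ?_⟩
      · show i = 2 * (i/2)
        have := Nat.even_iff.1 he
        omega
      · rw [Hfun, dif_pos h, if_pos (Nat.even_iff.1 he)]
    · right; left
      refine ⟨⟨i/2, by omega⟩, ?_, ?_⟩
      · show i = 2 * (i/2) + 1
        have := Nat.odd_iff.1 ho
        omega
      · rw [Hfun, dif_pos h, if_neg (by rw [Nat.odd_iff.1 ho]; exact one_ne_zero)]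
  · right; right
    refine ⟨by omega, ?_⟩
    rw [Hfun, dif_neg h, dif_pos (by omega)]
    exact Finset.orderEmbOfFin_mem _ _ _

lemma Omega_Hfun (hfree : ∀ x ∈ N', barF x ∉ N')
    (hdisj : ∀ a ∈ Q, embF a ∉ N' ∧ barF (embF a) ∉ N')
    (i j : ℕ) (hi : i < 2*Q.card + N'.card) (hj : j < 2*Q.card + N'.card) (hij : i < j) :
    OmegaForm n (Eb (2*n) (Hfun hn Q N' i)) (Eb (2*n) (Hfun hn Q N' j)) =
      if (j = i + 1 ∧ i % 2 = 0 ∧ i < 2*Q.card) then 1 else 0 := by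
  rw [Omega_basis]
  rcases Hfun_cases hn Q N' i (by omega) with ⟨t, hit, hx⟩ | ⟨t, hit, hx⟩ | ⟨hiN, hx⟩ <;>
    rcases Hfun_cases hn Q N' j hj with ⟨s, hjs, hy⟩ | ⟨s, hjs, hy⟩ | ⟨hjN, hy⟩
  · -- even, even
    rw [hx, hy]
    have hA := (Q.orderEmbOfFin rfl t).isLt
    have hB := (Q.orderEmbOfFin rfl s).isLt
    rw [embF_val, embF_val]
    rw [if_neg (by omega), if_neg (by omega), if_neg (by omega)]
    norm_num
  · -- even, odd
    rw [hx, hy]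
    have hA := (Q.orderEmbOfFin rfl t).isLt
    have hB := (Q.orderEmbOfFin rfl s).isLt
    rw [barF_embF_val, embF_val]
    by_cases hts : (t:ℕ) = (s:ℕ)
    · have hts' : t = s := Fin.ext hts
      subst hts'
      rw [if_pos ⟨by omega, by omega⟩, if_neg (by omega), if_pos ⟨by omega, by omega, by omega⟩]
      norm_num
    · have hab : ((Q.orderEmbOfFin rfl t : Fin n) : ℕ) ≠ ((Q.orderEmbOfFin rfl s : Fin n) : ℕ) :=
        fun hc => hts (by
          have : (Q.orderEmbOfFin rfl t : Fin n) = Q.orderEmbOfFin rfl s := Fin.ext hc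
          exact Finset.orderEmbOfFin_eq_orderEmbOfFin_iff.1 this)
      rw [if_neg (by omega), if_neg (by omega), if_neg (by omega)]
      norm_num
  · -- even, N
    rw [hx]
    have hA := (Q.orderEmbOfFin rfl t).isLt
    have haQ := Finset.orderEmbOfFin_mem Q rfl t
    have he := embF_val (Q.orderEmbOfFin rfl t)
    have hyv := (Hfun hn Q N' j).isLt
    have hC1 : ¬(((embF (Q.orderEmbOfFin rfl t) : Fin (2*n)) : ℕ) < n ∧
        ((Hfun hn Q N' j : Fin (2*n)) : ℕ)
          = 2*n - 1 - ((embF (Q.orderEmbOfFin rfl t) : Fin (2*n)) : ℕ)) := by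
      rintro ⟨h1, h2⟩
      have heq : Hfun hn Q N' j = barF (embF (Q.orderEmbOfFin rfl t)) := by
        refine Fin.ext ?_
        rw [barF_embF_val]; omega
      exact (hdisj _ haQ).2 (heq ▸ hy)
    have hC2 : ¬(((Hfun hn Q N' j : Fin (2*n)) : ℕ) < n ∧
        ((embF (Q.orderEmbOfFin rfl t) : Fin (2*n)) : ℕ)
          = 2*n - 1 - ((Hfun hn Q N' j : Fin (2*n)) : ℕ)) := by
      rintro ⟨h1, h2⟩
      have heq : Hfun hn Q N' j = barF (embF (Q.orderEmbOfFin rfl t)) := by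
        refine Fin.ext ?_
        rw [barF_embF_val]; omega
      exact (hdisj _ haQ).2 (heq ▸ hy)
    rw [if_neg hC1, if_neg hC2,
      if_neg (show ¬(j = i + 1 ∧ i % 2 = 0 ∧ i < 2*Q.card) by omega)]
    norm_num
  · -- odd, even
    rw [hx, hy]
    have hA := (Q.orderEmbOfFin rfl t).isLt
    have hB := (Q.orderEmbOfFin rfl s).isLt
    rw [barF_embF_val, embF_val]
    by_cases hts : (t:ℕ) = (s:ℕ)
    · exfalso; omega
    · have hab : ((Q.orderEmbOfFin rfl t : Fin n) : ℕ) ≠ ((Q.orderEmbOfFin rfl s : Fin n) : ℕ) :=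
        fun hc => hts (by
          have : (Q.orderEmbOfFin rfl t : Fin n) = Q.orderEmbOfFin rfl s := Fin.ext hc
          exact Finset.orderEmbOfFin_eq_orderEmbOfFin_iff.1 this)
      rw [if_neg (by omega), if_neg (by omega), if_neg (by omega)]
      norm_num
  · -- odd, odd
    rw [hx, hy]
    have hA := (Q.orderEmbOfFin rfl t).isLt
    have hB := (Q.orderEmbOfFin rfl s).isLt
    rw [barF_embF_val, barF_embF_val]
    rw [if_neg (by omega), if_neg (by omega), if_neg (by omega)]
    norm_num
  · -- odd, N
    rw [hx]
    have hA := (Q.orderEmbOfFin rfl t).isLt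
    have haQ := Finset.orderEmbOfFin_mem Q rfl t
    have hb := barF_embF_val (Q.orderEmbOfFin rfl t)
    have hyv := (Hfun hn Q N' j).isLt
    have hC1 : ¬(((barF (embF (Q.orderEmbOfFin rfl t)) : Fin (2*n)) : ℕ) < n ∧
        ((Hfun hn Q N' j : Fin (2*n)) : ℕ)
          = 2*n - 1 - ((barF (embF (Q.orderEmbOfFin rfl t)) : Fin (2*n)) : ℕ)) := by
      rintro ⟨h1, h2⟩
      omega
    have hC2 : ¬(((Hfun hn Q N' j : Fin (2*n)) : ℕ) < n ∧
        ((barF (embF (Q.orderEmbOfFin rfl t)) : Fin (2*n)) : ℕ)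
          = 2*n - 1 - ((Hfun hn Q N' j : Fin (2*n)) : ℕ)) := by
      rintro ⟨h1, h2⟩
      have he := embF_val (Q.orderEmbOfFin rfl t)
      have heq : Hfun hn Q N' j = embF (Q.orderEmbOfFin rfl t) := by
        refine Fin.ext ?_
        omega
      exact (hdisj _ haQ).1 (heq ▸ hy)
    rw [if_neg hC1, if_neg hC2,
      if_neg (show ¬(j = i + 1 ∧ i % 2 = 0 ∧ i < 2*Q.card) by omega)]
    norm_num
  · -- N, even : impossible since i < j
    have hB := (Q.orderEmbOfFin rfl s).isLt
    omega
  · -- N, odd : impossible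
    have hB := (Q.orderEmbOfFin rfl s).isLt
    omega
  · -- N, N
    have hxv := (Hfun hn Q N' i).isLt
    have hyv := (Hfun hn Q N' j).isLt
    have hC1 : ¬(((Hfun hn Q N' i : Fin (2*n)) : ℕ) < n ∧
        ((Hfun hn Q N' j : Fin (2*n)) : ℕ)
          = 2*n - 1 - ((Hfun hn Q N' i : Fin (2*n)) : ℕ)) := by
      rintro ⟨h1, h2⟩
      have heq : Hfun hn Q N' j = barF (Hfun hn Q N' i) := by
        refine Fin.ext ?_
        rw [barF_val]; omega
      exact hfree _ hx (heq ▸ hy)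
    have hC2 : ¬(((Hfun hn Q N' j : Fin (2*n)) : ℕ) < n ∧
        ((Hfun hn Q N' i : Fin (2*n)) : ℕ)
          = 2*n - 1 - ((Hfun hn Q N' j : Fin (2*n)) : ℕ)) := by
      rintro ⟨h1, h2⟩
      have heq : Hfun hn Q N' i = barF (Hfun hn Q N' j) := by
        refine Fin.ext ?_
        rw [barF_val]; omega
      exact hfree _ hy (heq ▸ hx)
    rw [if_neg hC1, if_neg hC2,
      if_neg (show ¬(j = i + 1 ∧ i % 2 = 0 ∧ i < 2*Q.card) by omega)]
    norm_num


end lists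

lemma succAbove_val {c : ℕ} (p : Fin (c+1)) (x : Fin c) :
    ((p.succAbove x) : ℕ) = if (x:ℕ) < (p:ℕ) then (x:ℕ) else (x:ℕ)+1 := by
  by_cases h : (x:ℕ) < (p:ℕ)
  · rw [if_pos h, Fin.succAbove_of_castSucc_lt _ _ (by rwa [Fin.lt_def, Fin.coe_castSucc])]
    rfl
  · rw [if_neg h, Fin.succAbove_of_le_castSucc _ _ (by rw [Fin.le_def, Fin.coe_castSucc]; omega)]
    rfl

lemma erase_orderEmb {β : Type*} [LinearOrder β] [DecidableEq β] (s : Finset β)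
    (t : Fin s.card) (m : Fin ((s.erase (s.orderEmbOfFin rfl t)).card)) :
    (s.erase (s.orderEmbOfFin rfl t)).orderEmbOfFin rfl m
      = s.orderEmbOfFin rfl ⟨if (m:ℕ) < (t:ℕ) then (m:ℕ) else (m:ℕ)+1, by
          have hc := Finset.card_erase_of_mem (Finset.orderEmbOfFin_mem s rfl t)
          have hm := m.isLt
          have ht := t.isLt
          split_ifs <;> omega⟩ := by
  have hc := Finset.card_erase_of_mem (Finset.orderEmbOfFin_mem s rfl t)
  have ht := t.isLt
  set f : Fin ((s.erase (s.orderEmbOfFin rfl t)).card) → β := fun m =>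
    s.orderEmbOfFin rfl ⟨if (m:ℕ) < (t:ℕ) then (m:ℕ) else (m:ℕ)+1, by
      have hm := m.isLt
      split_ifs <;> omega⟩ with hf
  have hfs : ∀ x, f x ∈ s.erase (s.orderEmbOfFin rfl t) := by
    intro x
    rw [Finset.mem_erase]
    constructor
    · apply (s.orderEmbOfFin rfl).injective.ne
      apply Fin.ne_of_val_ne
      show (if (x:ℕ) < (t:ℕ) then (x:ℕ) else (x:ℕ)+1) ≠ (t:ℕ)
      split_ifs <;> omega
    · exact Finset.orderEmbOfFin_mem _ _ _
  have hmono : StrictMono f := by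
    intro a b hab
    apply (s.orderEmbOfFin rfl).strictMono
    rw [Fin.lt_def]
    show (if (a:ℕ) < (t:ℕ) then (a:ℕ) else (a:ℕ)+1) < (if (b:ℕ) < (t:ℕ) then (b:ℕ) else (b:ℕ)+1)
    have := Fin.lt_def.1 hab
    split_ifs <;> omega
  have := Finset.orderEmbOfFin_unique (rfl : (s.erase (s.orderEmbOfFin rfl t)).card = _)
    hfs hmono
  exact (congrFun this m).symm

section lists2
variable (hn : 0 < n) (Q : Finset (Fin n)) (N' : Finset (Fin (2*n)))

lemma Hfun_erase (t : Fin Q.card) (w : ℕ) (hw : w < 2*(Q.card - 1) + N'.card) :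
    Hfun hn (Q.erase (Q.orderEmbOfFin rfl t)) N' w
      = Hfun hn Q N' (if w < 2*(t:ℕ) then w else w + 2) := by
  have hc : (Q.erase (Q.orderEmbOfFin rfl t)).card = Q.card - 1 :=
    Finset.card_erase_of_mem (Finset.orderEmbOfFin_mem _ _ _)
  have ht := t.isLt
  by_cases h1 : w < 2 * (Q.card - 1)
  · by_cases hwt : w < 2*(t:ℕ)
    · rw [if_pos hwt]
      rw [Hfun, Hfun, dif_pos (by omega), dif_pos (by omega)]
      have hkey : (Q.erase (Q.orderEmbOfFin rfl t)).orderEmbOfFin rfl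
          ⟨w/2, by omega⟩ = Q.orderEmbOfFin rfl ⟨w/2, by omega⟩ := by
        rw [erase_orderEmb]
        congr 1
        refine Fin.ext ?_
        show (if w/2 < (t:ℕ) then w/2 else w/2+1) = w/2
        rw [if_pos (by omega)]
      rw [hkey]
    · rw [if_neg hwt]
      rw [Hfun, Hfun, dif_pos (by omega), dif_pos (by omega)]
      rw [show (w+2) % 2 = w % 2 from by omega]
      have hkey : (Q.erase (Q.orderEmbOfFin rfl t)).orderEmbOfFin rfl
          ⟨w/2, by omega⟩ = Q.orderEmbOfFin rfl ⟨(w+2)/2, by omega⟩ := by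
        rw [erase_orderEmb]
        congr 1
        refine Fin.ext ?_
        show (if w/2 < (t:ℕ) then w/2 else w/2+1) = (w+2)/2
        rw [if_neg (by omega)]
        omega
      rw [hkey]
  · rw [if_neg (by omega)]
    rw [Hfun, Hfun, dif_neg (by omega), dif_pos (by omega), dif_neg (by omega),
      dif_pos (by omega)]
    congr 1
    refine Fin.ext ?_
    show w - 2 * (Q.erase (Q.orderEmbOfFin rfl t)).card = (w + 2) - 2*Q.card
    omega

end lists2

lemma even_sum {M : Type*} [AddCommMonoid M] (c : ℕ) (W : ℕ → M) :
    ∀ K, 2*c ≤ K → (∑ i ∈ Finset.range K, (if i % 2 = 0 ∧ i < 2*c then W (i/2) else 0))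
      = ∑ t ∈ Finset.range c, W t := by
  induction c with
  | zero =>
    intro K hK
    simp
  | succ c ih =>
    intro K hK
    have step : ∀ i, (if i % 2 = 0 ∧ i < 2*(c+1) then W (i/2) else 0)
        = (if i % 2 = 0 ∧ i < 2*c then W (i/2) else 0) + (if i = 2*c then W c else 0) := by
      intro i
      by_cases h1 : i = 2*c
      · subst h1
        rw [if_pos ⟨by omega, by omega⟩, if_neg (by omega), if_pos rfl, zero_add]
        congr 1
        omega
      · rw [if_neg h1, add_zero]
        by_cases h2 : i % 2 = 0 ∧ i < 2*c
        · rw [if_pos h2, if_pos ⟨h2.1, by omega⟩]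
        · by_cases h3 : i % 2 = 0 ∧ i < 2*(c+1)
          · exfalso; omega
          · rw [if_neg h2, if_neg h3]
    rw [Finset.sum_congr rfl (fun i _ => step i), Finset.sum_add_distrib, ih K (by omega)]
    rw [Finset.sum_ite_eq' (Finset.range K) (2*c) (fun _ => W c)]
    rw [if_pos (Finset.mem_range.2 (by omega)), Finset.sum_range_succ]



section main
variable (hn : 0 < n) (Q : Finset (Fin n)) (N' : Finset (Fin (2*n))) (k : ℕ)

def listv (m : ℕ) : Fin m → Vsp n := fun i => Eb (2*n) (Hfun hn Q N' i.val)

lemma listv_apply (m : ℕ) (i : Fin m) :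
    listv hn Q N' m i = Eb (2*n) (Hfun hn Q N' i.val) := rfl

def melem (m : ℕ) : (⋀[ℂ]^m (Vsp n) : Submodule ℂ (ExteriorAlgebra ℂ (Vsp n))) :=
  ⟨ιMulti ℂ m (listv hn Q N' m), ιMulti_range ℂ m (Set.mem_range_self _)⟩

set_option maxHeartbeats 1000000 in
lemma phi_melem
    (hm : 2*Q.card + N'.card = k + 2)
    (hfree : ∀ x ∈ N', barF x ∉ N')
    (hdisj : ∀ a ∈ Q, embF a ∉ N' ∧ barF (embF a) ∉ N')
    (φ : (⋀[ℂ]^(k + 2) (Vsp n)) →ₗ[ℂ] (⋀[ℂ]^k (Vsp n)))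
    (hφ : ∀ (v : Fin (k + 2) → Vsp n) (x : ⋀[ℂ]^(k + 2) (Vsp n)),
        (x : ExteriorAlgebra ℂ (Vsp n)) = ιMulti ℂ (k + 2) v →
        ((φ x : ⋀[ℂ]^k (Vsp n)) : ExteriorAlgebra ℂ (Vsp n)) =
          ∑ i : Fin (k + 2), ∑ j : Fin (k + 2),
            if hij : i < j then
              ((-1 : ℂ) ^ ((i : ℕ) + (j : ℕ) + 1) * OmegaForm n (v i) (v j)) •
                ιMulti ℂ k (omit2 v i j hij)
            else 0) :
    ((φ (melem hn Q N' (k+2)) : ⋀[ℂ]^k (Vsp n)) : ExteriorAlgebra ℂ (Vsp n))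
      = ∑ t ∈ Finset.range Q.card,
          (if h : t < Q.card then
            ιMulti ℂ k (listv hn (Q.erase (Q.orderEmbOfFin rfl ⟨t, h⟩)) N' k) else 0) := by
  have hv := hφ (listv hn Q N' (k+2)) (melem hn Q N' (k+2)) rfl
  rw [hv]
  have inner : ∀ i : Fin (k+2),
      (∑ j : Fin (k+2), if hij : i < j then
        ((-1:ℂ)^((i:ℕ)+(j:ℕ)+1)
            * OmegaForm n (listv hn Q N' (k+2) i) (listv hn Q N' (k+2) j)) •
          ιMulti ℂ k (omit2 (listv hn Q N' (k+2)) i j hij) else 0)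
      = (if (i:ℕ) % 2 = 0 ∧ (i:ℕ) < 2*Q.card then
          (if h : (i:ℕ)/2 < Q.card then
            ιMulti ℂ k (listv hn (Q.erase (Q.orderEmbOfFin rfl ⟨(i:ℕ)/2, h⟩)) N' k) else 0)
          else 0) := by
    intro i
    by_cases hcond : (i:ℕ) % 2 = 0 ∧ (i:ℕ) < 2*Q.card
    · rw [if_pos hcond]
      have hQpos : 1 ≤ Q.card := by omega
      have hj0 : ((i:ℕ)+1) < k + 2 := by omega
      rw [Finset.sum_eq_single_of_mem (⟨(i:ℕ)+1, hj0⟩ : Fin (k+2)) (Finset.mem_univ _)]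
      · rw [dif_pos (show i < ⟨(i:ℕ)+1, hj0⟩ from by rw [Fin.lt_def]; exact Nat.lt_succ_self _)]
        have hΩ := Omega_Hfun hn Q N' hfree hdisj (i:ℕ) ((i:ℕ)+1)
          (by omega) (by omega) (Nat.lt_succ_self _)
        simp only [listv_apply]
        rw [hΩ, if_pos ⟨rfl, hcond.1, hcond.2⟩, mul_one]
        have hs : ((-1:ℂ))^((i:ℕ)+((i:ℕ)+1)+1) = 1 := by
          rw [show (i:ℕ)+((i:ℕ)+1)+1 = 2*((i:ℕ)+1) from by ring, pow_mul]
          norm_num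
        rw [hs, one_smul, dif_pos (show (i:ℕ)/2 < Q.card from by omega)]
        congr 1
        funext w
        show Eb (2*n) (Hfun hn Q N'
            ((((⟨(i:ℕ)+1, hj0⟩:Fin (k+2))).succAbove
              ((⟨(i:ℕ), by omega⟩ : Fin (k+1)).succAbove w) : Fin (k+2)) : ℕ))
          = listv hn (Q.erase (Q.orderEmbOfFin rfl ⟨(i:ℕ)/2, by omega⟩)) N' k w
        rw [listv_apply]
        have hval : ((((⟨(i:ℕ)+1, hj0⟩:Fin (k+2))).succAbove
            ((⟨(i:ℕ), by omega⟩ : Fin (k+1)).succAbove w) : Fin (k+2)) : ℕ)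
            = if (w:ℕ) < (i:ℕ) then (w:ℕ) else (w:ℕ)+2 := by
          rw [succAbove_val, succAbove_val]
          have hw := w.isLt
          have hgoal : (if (if (w:ℕ) < (i:ℕ) then (w:ℕ) else (w:ℕ)+1) < (i:ℕ)+1
              then (if (w:ℕ) < (i:ℕ) then (w:ℕ) else (w:ℕ)+1)
              else (if (w:ℕ) < (i:ℕ) then (w:ℕ) else (w:ℕ)+1)+1)
              = if (w:ℕ) < (i:ℕ) then (w:ℕ) else (w:ℕ)+2 := by
            split_ifs <;> omega
          exact hgoal
        rw [hval]
        rw [Hfun_erase hn Q N' ⟨(i:ℕ)/2, by omega⟩ (w:ℕ) (by have := w.isLt; omega)]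
        congr 1
        have h2 : 2 * ((⟨(i:ℕ)/2, show (i:ℕ)/2 < Q.card from by omega⟩ : Fin Q.card) : ℕ)
            = (i:ℕ) := by
          show 2 * ((i:ℕ)/2) = (i:ℕ)
          omega
        rw [h2]
      · intro j _ hjne
        by_cases hij : i < j
        · rw [dif_pos hij]
          have hΩ := Omega_Hfun hn Q N' hfree hdisj (i:ℕ) (j:ℕ)
            (by omega) (by have := j.isLt; omega) (Fin.lt_def.1 hij)
          simp only [listv_apply]
          rw [hΩ, if_neg, mul_zero, zero_smul]
          rintro ⟨h1, _⟩
          exact hjne (Fin.ext h1)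
        · rw [dif_neg hij]
    · rw [if_neg hcond]
      apply Finset.sum_eq_zero
      intro j _
      by_cases hij : i < j
      · rw [dif_pos hij]
        have hΩ := Omega_Hfun hn Q N' hfree hdisj (i:ℕ) (j:ℕ)
          (by have := i.isLt; omega) (by have := j.isLt; omega) (Fin.lt_def.1 hij)
        simp only [listv_apply]
        rw [hΩ, if_neg, mul_zero, zero_smul]
        rintro ⟨_, h2, h3⟩
        exact hcond ⟨h2, h3⟩
      · rw [dif_neg hij]
  rw [Finset.sum_congr rfl (fun i _ => inner i)]
  rw [Fin.sum_univ_eq_sum_range (fun x : ℕ => if x % 2 = 0 ∧ x < 2*Q.card then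
          (if h : x/2 < Q.card then
            ιMulti ℂ k (listv hn (Q.erase (Q.orderEmbOfFin rfl ⟨x/2, h⟩)) N' k) else 0)
          else 0) (k+2)]
  rw [even_sum Q.card (fun x : ℕ => if h : x < Q.card then
      ιMulti ℂ k (listv hn (Q.erase (Q.orderEmbOfFin rfl ⟨x, h⟩)) N' k) else 0)
    (k+2) (by omega)]


lemma phi_melem'
    (hm : 2*Q.card + N'.card = k + 2)
    (hfree : ∀ x ∈ N', barF x ∉ N')
    (hdisj : ∀ a ∈ Q, embF a ∉ N' ∧ barF (embF a) ∉ N')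
    (φ : (⋀[ℂ]^(k + 2) (Vsp n)) →ₗ[ℂ] (⋀[ℂ]^k (Vsp n)))
    (hφ : ∀ (v : Fin (k + 2) → Vsp n) (x : ⋀[ℂ]^(k + 2) (Vsp n)),
        (x : ExteriorAlgebra ℂ (Vsp n)) = ιMulti ℂ (k + 2) v →
        ((φ x : ⋀[ℂ]^k (Vsp n)) : ExteriorAlgebra ℂ (Vsp n)) =
          ∑ i : Fin (k + 2), ∑ j : Fin (k + 2),
            if hij : i < j then
              ((-1 : ℂ) ^ ((i : ℕ) + (j : ℕ) + 1) * OmegaForm n (v i) (v j)) •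
                ιMulti ℂ k (omit2 v i j hij)
            else 0) :
    φ (melem hn Q N' (k+2)) = ∑ a ∈ Q, melem hn (Q.erase a) N' k := by
  refine Subtype.ext ?_
  rw [AddSubmonoidClass.coe_finset_sum]
  rw [phi_melem hn Q N' k hm hfree hdisj φ hφ]
  refine Finset.sum_bij (fun t ht => Q.orderEmbOfFin rfl ⟨t, Finset.mem_range.1 ht⟩)
    ?_ ?_ ?_ ?_
  · intro t ht
    exact Finset.orderEmbOfFin_mem _ _ _
  · intro t1 h1 t2 h2 heq
    have := Finset.orderEmbOfFin_eq_orderEmbOfFin_iff.1 heq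
    simpa using this
  · intro a ha
    have : a ∈ Set.range (Q.orderEmbOfFin rfl) := by
      rw [Finset.range_orderEmbOfFin]
      exact ha
    obtain ⟨i, hi⟩ := this
    refine ⟨(i:ℕ), Finset.mem_range.2 i.isLt, ?_⟩
    rw [← hi]
  · intro t ht
    rw [dif_pos (Finset.mem_range.1 ht)]
    rfl

lemma Hfun_N_inj (i j : ℕ) (hi1 : 2*Q.card ≤ i) (hi2 : i < 2*Q.card + N'.card)
    (hj1 : 2*Q.card ≤ j) (hj2 : j < 2*Q.card + N'.card)
    (h : Hfun hn Q N' i = Hfun hn Q N' j) : i = j := by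
  have hL : Hfun hn Q N' i = N'.orderEmbOfFin rfl ⟨i - 2*Q.card, by omega⟩ := by
    rw [Hfun, dif_neg (by omega), dif_pos (by omega)]
  have hR : Hfun hn Q N' j = N'.orderEmbOfFin rfl ⟨j - 2*Q.card, by omega⟩ := by
    rw [Hfun, dif_neg (by omega), dif_pos (by omega)]
  rw [hL, hR] at h
  have h2 : i - 2*Q.card = j - 2*Q.card :=
    Finset.orderEmbOfFin_eq_orderEmbOfFin_iff.1 h
  omega

end main

def freeP (N' : Finset (Fin (2*n))) : Finset (Fin n) :=
  Finset.univ.filter (fun a => embF a ∉ N' ∧ barF (embF a) ∉ N')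

lemma freeP_card (N' : Finset (Fin (2*n))) : n - N'.card ≤ (freeP N').card := by
  have hsplit := Finset.card_filter_add_card_filter_not
    (s := (Finset.univ : Finset (Fin n)))
    (p := fun a => embF a ∉ N' ∧ barF (embF a) ∉ N')
  have hbound : (Finset.univ.filter
      (fun a : Fin n => ¬(embF a ∉ N' ∧ barF (embF a) ∉ N'))).card ≤ N'.card := by
    apply Finset.card_le_card_of_injOn
      (fun a => if embF a ∈ N' then embF a else barF (embF a))
    · intro a ha
      rw [Finset.mem_coe, Finset.mem_filter] at ha
      simp only [Finset.mem_coe]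
      have ha2 := ha.2
      by_cases h1 : embF a ∈ N'
      · rw [if_pos h1]; exact h1
      · rw [if_neg h1]
        by_cases h2 : barF (embF a) ∈ N'
        · exact h2
        · exact absurd ⟨h1, h2⟩ ha2
    · intro a _ b _ hab
      simp only [] at hab
      by_cases h1 : embF a ∈ N' <;> by_cases h2 : embF b ∈ N'
      · rw [if_pos h1, if_pos h2] at hab
        exact embF_inj hab
      · rw [if_pos h1, if_neg h2] at hab
        exfalso
        have h3 := congrArg (Fin.val : Fin (2*n) → ℕ) hab
        rw [embF_val, barF_embF_val] at h3
        have := a.isLt; have := b.isLt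
        omega
      · rw [if_neg h1, if_pos h2] at hab
        exfalso
        have h3 := congrArg (Fin.val : Fin (2*n) → ℕ) hab
        rw [barF_embF_val, embF_val] at h3
        have := a.isLt; have := b.isLt
        omega
      · rw [if_neg h1, if_neg h2] at hab
        exact embF_inj (barF_inj hab)
  have htotal : (freeP N').card
      + (Finset.univ.filter
        (fun a : Fin n => ¬(embF a ∉ N' ∧ barF (embF a) ∉ N'))).card = n := by
    rw [freeP, hsplit]
    simp
  omega

lemma exists_perm {m : ℕ} {β : Type*} [DecidableEq β] (f g : Fin m → β)
    (hf : Function.Injective f)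
    (hrange : Finset.image f Finset.univ = Finset.image g Finset.univ) :
    ∃ σ : Equiv.Perm (Fin m), f = g ∘ σ := by
  have hmem : ∀ i, f i ∈ Finset.image g Finset.univ := fun i =>
    hrange ▸ Finset.mem_image_of_mem f (Finset.mem_univ i)
  choose τ hτ1 hτ2 using fun i => Finset.mem_image.1 (hmem i)
  have hτinj : Function.Injective τ := fun a b hab => hf (by rw [← hτ2 a, ← hτ2 b, hab])
  refine ⟨Equiv.ofBijective τ (Finite.injective_iff_bijective.1 hτinj), ?_⟩
  funext i
  exact (hτ2 i).symm

lemma monomial_decomp (k : ℕ) (hn : 0 < n) (g : Fin k → Fin (2*n))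
    (hg : Function.Injective g) :
    ∃ (Q : Finset (Fin n)) (N' : Finset (Fin (2*n))) (σ : Equiv.Perm (Fin k)),
      (∀ x ∈ N', barF x ∉ N') ∧ Q ⊆ freeP N' ∧ 2*Q.card + N'.card = k ∧
      (fun i => Eb (2*n) (g i)) = (listv hn Q N' k) ∘ σ := by
  classical
  set U := Finset.image g Finset.univ with hU
  have hUcard : U.card = k := by
    rw [hU, Finset.card_image_of_injective _ hg, Finset.card_univ, Fintype.card_fin]
  set Q := Finset.univ.filter (fun a : Fin n => embF a ∈ U ∧ barF (embF a) ∈ U) with hQ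
  set N' := U.filter (fun x => barF x ∉ U) with hN
  have hfree : ∀ x ∈ N', barF x ∉ N' := by
    intro x hx hbx
    rw [hN, Finset.mem_filter] at hx hbx
    exact hx.2 hbx.1
  have hQsub : Q ⊆ freeP N' := by
    intro a ha
    rw [hQ, Finset.mem_filter] at ha
    rw [freeP, Finset.mem_filter]
    refine ⟨Finset.mem_univ _, ?_, ?_⟩
    · rw [hN, Finset.mem_filter]
      rintro ⟨-, hc⟩
      exact hc ha.2.2
    · rw [hN, Finset.mem_filter]
      rintro ⟨-, hc⟩
      rw [barF_barF] at hc
      exact hc ha.2.1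
  have hPdef : U.filter (fun x => barF x ∈ U)
      = Q.image embF ∪ Q.image (fun a => barF (embF a)) := by
    ext x
    simp only [Finset.mem_filter, Finset.mem_union, Finset.mem_image, hQ]
    constructor
    · rintro ⟨hxU, hbxU⟩
      by_cases hv : (x:ℕ) < n
      · left
        have he : embF (⟨(x:ℕ), hv⟩ : Fin n) = x := Fin.ext rfl
        exact ⟨⟨(x:ℕ), hv⟩, ⟨Finset.mem_univ _, by rwa [he], by rwa [he]⟩, he⟩
      · right
        have hbv : ((barF x):ℕ) < n := by rw [barF_val]; have := x.isLt; omega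
        have he : embF (⟨((barF x):ℕ), hbv⟩ : Fin n) = barF x := Fin.ext rfl
        refine ⟨⟨((barF x):ℕ), hbv⟩, ⟨Finset.mem_univ _, by rwa [he], ?_⟩, ?_⟩
        · rw [he, barF_barF]
          exact hxU
        · rw [he, barF_barF]
    · rintro (⟨a, ha, rfl⟩ | ⟨a, ha, rfl⟩)
      · exact ⟨ha.2.1, ha.2.2⟩
      · rw [barF_barF]
        exact ⟨ha.2.2, ha.2.1⟩
  have hcard : 2*Q.card + N'.card = k := by
    have hsplit := Finset.card_filter_add_card_filter_not
      (s := U) (p := fun x => barF x ∈ U)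
    have hdisjim : Disjoint (Q.image embF) (Q.image (fun a => barF (embF a))) := by
      rw [Finset.disjoint_left]
      intro x hx1 hx2
      obtain ⟨a, -, rfl⟩ := Finset.mem_image.1 hx1
      obtain ⟨b, -, hb⟩ := Finset.mem_image.1 hx2
      have h1 := a.isLt
      have h2 := congrArg (Fin.val : Fin (2*n) → ℕ) hb
      rw [barF_embF_val, embF_val] at h2
      have := b.isLt
      omega
    have hPcard : (U.filter (fun x => barF x ∈ U)).card = 2*Q.card := by
      rw [hPdef, Finset.card_union_of_disjoint hdisjim,
        Finset.card_image_of_injective _ embF_inj,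
        Finset.card_image_of_injective _
          (show Function.Injective (fun a : Fin n => barF (embF a)) from
            fun a b hab => embF_inj (barF_inj hab))]
      ring
    have hN'c : (U.filter (fun x => ¬ (barF x ∈ U))).card = N'.card := by rw [hN]
    omega
  have hdisjQ : ∀ a ∈ Q, embF a ∉ N' ∧ barF (embF a) ∉ N' := fun a ha =>
    (Finset.mem_filter.1 (hQsub ha)).2
  have hmemU : ∀ w : Fin k, Hfun hn Q N' (w:ℕ) ∈ U := by
    intro w
    have hw : (w:ℕ) < 2*Q.card + N'.card := by rw [hcard]; exact w.isLt
    rcases Hfun_cases hn Q N' (w:ℕ) hw with ⟨t, ht, hx⟩ | ⟨t, ht, hx⟩ | ⟨ht, hx⟩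
    · rw [hx]
      exact (Finset.mem_filter.1 (Finset.orderEmbOfFin_mem Q rfl t)).2.1
    · rw [hx]
      exact (Finset.mem_filter.1 (Finset.orderEmbOfFin_mem Q rfl t)).2.2
    · exact Finset.filter_subset _ U (hN ▸ hx)
  have hinj : Function.Injective (fun w : Fin k => Hfun hn Q N' (w:ℕ)) := by
    intro w w' heq
    simp only [] at heq
    have hw : (w:ℕ) < 2*Q.card + N'.card := by rw [hcard]; exact w.isLt
    have hw' : ((w':Fin k):ℕ) < 2*Q.card + N'.card := by rw [hcard]; exact w'.isLt
    refine Fin.ext ?_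
    rcases Hfun_cases hn Q N' (w:ℕ) hw with ⟨t, ht, hx⟩ | ⟨t, ht, hx⟩ | ⟨ht, hx⟩ <;>
      rcases Hfun_cases hn Q N' ((w':Fin k):ℕ) hw' with ⟨s, hs, hy⟩ | ⟨s, hs, hy⟩ | ⟨hs, hy⟩
    · rw [hx, hy] at heq
      have := Finset.orderEmbOfFin_eq_orderEmbOfFin_iff.1 (embF_inj heq)
      omega
    · exfalso
      rw [hx, hy] at heq
      have h1 := congrArg (Fin.val : Fin (2*n) → ℕ) heq
      rw [embF_val, barF_embF_val] at h1
      have := (Q.orderEmbOfFin rfl t).isLt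
      have := (Q.orderEmbOfFin rfl s).isLt
      omega
    · exfalso
      have hmm : embF (Q.orderEmbOfFin rfl t) ∈ N' := by
        rw [← hx, heq]; exact hy
      exact (hdisjQ _ (Finset.orderEmbOfFin_mem Q rfl t)).1 hmm
    · exfalso
      rw [hx, hy] at heq
      have h1 := congrArg (Fin.val : Fin (2*n) → ℕ) heq
      rw [embF_val, barF_embF_val] at h1
      have := (Q.orderEmbOfFin rfl t).isLt
      have := (Q.orderEmbOfFin rfl s).isLt
      omega
    · rw [hx, hy] at heq
      have := Finset.orderEmbOfFin_eq_orderEmbOfFin_iff.1 (embF_inj (barF_inj heq))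
      omega
    · exfalso
      have hmm : barF (embF (Q.orderEmbOfFin rfl t)) ∈ N' := by
        rw [← hx, heq]; exact hy
      exact (hdisjQ _ (Finset.orderEmbOfFin_mem Q rfl t)).2 hmm
    · exfalso
      have hmm : embF (Q.orderEmbOfFin rfl s) ∈ N' := by
        rw [← hy, ← heq]; exact hx
      exact (hdisjQ _ (Finset.orderEmbOfFin_mem Q rfl s)).1 hmm
    · exfalso
      have hmm : barF (embF (Q.orderEmbOfFin rfl s)) ∈ N' := by
        rw [← hy, ← heq]; exact hx
      exact (hdisjQ _ (Finset.orderEmbOfFin_mem Q rfl s)).2 hmm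
    · exact Hfun_N_inj hn Q N' _ _ ht hw hs hw' heq
  have himg : Finset.image (fun w : Fin k => Hfun hn Q N' (w:ℕ)) Finset.univ = U := by
    apply Finset.eq_of_subset_of_card_le
    · intro x hx
      obtain ⟨w, -, rfl⟩ := Finset.mem_image.1 hx
      exact hmemU w
    · rw [hUcard, Finset.card_image_of_injective _ hinj, Finset.card_univ, Fintype.card_fin]
  obtain ⟨σ, hσ⟩ := exists_perm g (fun w : Fin k => Hfun hn Q N' (w:ℕ)) hg
    (by rw [himg])
  refine ⟨Q, N', σ, hfree, hQsub, hcard, ?_⟩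
  funext i
  show Eb (2*n) (g i) = listv hn Q N' k (σ i)
  rw [listv_apply]
  exact congrArg (Eb (2*n)) (congrFun hσ i)
end Part2

set_option maxHeartbeats 2000000 in
set_option synthInstance.maxHeartbeats 500000 in
open ExteriorAlgebra in
/-- The dimension of the kernel of the symplectic contraction
`φ : Λ^{k+2}(ℂ^{2n}) → Λ^{k}(ℂ^{2n})` equals `C(2n, k+2) − C(2n, k)` for `k + 2 ≤ n`. -/
theorem symplectic_contraction_ker_finrank (n k : ℕ) (hk : k + 2 ≤ n)
    (φ : (⋀[ℂ]^(k + 2) (Vsp n)) →ₗ[ℂ] (⋀[ℂ]^k (Vsp n)))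
    (hφ : ∀ (v : Fin (k + 2) → Vsp n) (x : ⋀[ℂ]^(k + 2) (Vsp n)),
        (x : ExteriorAlgebra ℂ (Vsp n)) = ιMulti ℂ (k + 2) v →
        ((φ x : ⋀[ℂ]^k (Vsp n)) : ExteriorAlgebra ℂ (Vsp n)) =
          ∑ i : Fin (k + 2), ∑ j : Fin (k + 2),
            if hij : i < j then
              ((-1 : ℂ) ^ ((i : ℕ) + (j : ℕ) + 1) * OmegaForm n (v i) (v j)) •
                ιMulti ℂ k (omit2 v i j hij)
            else 0) :
    Module.finrank ℂ (LinearMap.ker φ) =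
      Nat.choose (2 * n) (k + 2) - Nat.choose (2 * n) k := by
  classical
  have hn : 0 < n := by omega
  set R := LinearMap.range φ with hRdef
  have hmel : ∀ (N' : Finset (Fin (2*n))), (∀ x ∈ N', barF x ∉ N') →
      ∀ Q : Finset (Fin n), Q ⊆ freeP N' → 2*Q.card + N'.card = k →
      melem hn Q N' k ∈ R := by
    intro N' hfree Q hQsub hcard
    have hforall : ∀ ξ : Module.Dual ℂ ((↥(⋀[ℂ]^k (Vsp n))) ⧸ R),
        ξ (R.mkQ (melem hn Q N' k)) = 0 := by
      intro ξ
      have hF : 2*Q.card + 2 ≤ (freeP N').card := by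
        have := freeP_card (n := n) N'
        omega
      have hrel : ∀ Q' ⊆ freeP N', Q'.card = Q.card + 1 →
          ∑ a ∈ Q', (if 2*((Q'.erase a)).card + N'.card = k then
            ξ (R.mkQ (melem hn (Q'.erase a) N' k)) else 0) = 0 := by
        intro Q' hQ's hQ'c
        have hdisj' : ∀ a ∈ Q', embF a ∉ N' ∧ barF (embF a) ∉ N' := fun a ha =>
          (Finset.mem_filter.1 (hQ's ha)).2
        have hm' : 2*Q'.card + N'.card = k + 2 := by omega
        have hphi := phi_melem' hn Q' N' k hm' hfree hdisj' φ hφ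
        have hz0 : R.mkQ (∑ a ∈ Q', melem hn (Q'.erase a) N' k) = 0 := by
          rw [← hphi, Submodule.mkQ_apply, Submodule.Quotient.mk_eq_zero]
          exact LinearMap.mem_range_self φ _
        have hsum : ∑ a ∈ Q', (if 2*((Q'.erase a)).card + N'.card = k then
            ξ (R.mkQ (melem hn (Q'.erase a) N' k)) else 0)
            = ξ (R.mkQ (∑ a ∈ Q', melem hn (Q'.erase a) N' k)) := by
          rw [map_sum, map_sum]
          apply Finset.sum_congr rfl
          intro a ha
          rw [if_pos (by rw [Finset.card_erase_of_mem ha]; omega)]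
        rw [hsum, hz0, map_zero]
      have hcomb := combLemma (freeP N') Q.card
        (fun P => if 2*P.card + N'.card = k then ξ (R.mkQ (melem hn P N' k)) else 0)
        hF hrel Q hQsub rfl
      have hcomb' : (if 2*Q.card + N'.card = k then ξ (R.mkQ (melem hn Q N' k)) else 0)
          = 0 := hcomb
      rwa [if_pos hcard] at hcomb'
    have hzero : R.mkQ (melem hn Q N' k) = 0 := by
      rw [← Module.forall_dual_apply_eq_zero_iff (R := ℂ)]
      exact hforall
    rwa [Submodule.mkQ_apply, Submodule.Quotient.mk_eq_zero] at hzero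
  have hmono : ∀ (g : Fin k → Fin (2*n)), Function.Injective g →
      ∀ x : ↥(⋀[ℂ]^k (Vsp n)),
        (x : ExteriorAlgebra ℂ (Vsp n)) = ιMulti ℂ k (fun i => Eb (2*n) (g i)) →
        x ∈ R := by
    intro g hg x hx
    obtain ⟨Q, N', σ, hfree, hQsub, hcard, hlist⟩ := monomial_decomp k hn g hg
    have hmel' := hmel N' hfree Q hQsub hcard
    have hcoe : (x : ExteriorAlgebra ℂ (Vsp n))
        = Equiv.Perm.sign σ • (melem hn Q N' k : ExteriorAlgebra ℂ (Vsp n)) := by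
      rw [hx, hlist]
      exact AlternatingMap.map_perm (ιMulti ℂ k) (listv hn Q N' k) σ
    rcases Int.units_eq_one_or (Equiv.Perm.sign σ) with hs | hs
    · rw [hs, one_smul] at hcoe
      have hxm : x = melem hn Q N' k := Subtype.ext hcoe
      rw [hxm]
      exact hmel'
    · rw [hs] at hcoe
      have hneg : (x : ExteriorAlgebra ℂ (Vsp n))
          = -(melem hn Q N' k : ExteriorAlgebra ℂ (Vsp n)) := by
        rw [hcoe, Units.neg_smul, one_smul]
      have hxm : x = -(melem hn Q N' k) := by
        apply Subtype.ext
        rw [hneg]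
        simp
      rw [hxm]
      exact Submodule.neg_mem _ hmel'
  have hRtop : R = ⊤ := by
    rw [eq_top_iff]
    intro x _
    have hx2 : (x : ExteriorAlgebra ℂ (Vsp n))
        ∈ Submodule.span ℂ (Set.range (wedgeFam (2*n) k)) := by
      rw [span_wedgeFam (2*n) k]
      exact x.2
    have hle : Submodule.span ℂ (Set.range (wedgeFam (2*n) k))
        ≤ Submodule.map (⋀[ℂ]^k (Vsp n)).subtype R := by
      rw [Submodule.span_le]
      rintro _ ⟨S, rfl⟩
      refine ⟨wedgeB (2*n) k S, ?_, rfl⟩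
      apply hmono (fun i => (S.1.orderIsoOfFin S.2 i : Fin (2*n)))
      · intro a b hab
        exact (S.1.orderIsoOfFin S.2).injective (Subtype.ext hab)
      · rfl
    obtain ⟨y, hyR, hyx⟩ := hle hx2
    have hxy : y = x := Subtype.ext hyx
    rwa [← hxy]
  have hdim := LinearMap.finrank_range_add_finrank_ker φ
  rw [← hRdef, hRtop, finrank_top] at hdim
  have h1 : Module.finrank ℂ (↥(⋀[ℂ]^(k+2) (Vsp n))) = Nat.choose (2*n) (k+2) :=
    finrank_wedge (2*n) (k+2)
  have h2 : Module.finrank ℂ (↥(⋀[ℂ]^k (Vsp n))) = Nat.choose (2*n) k :=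
    finrank_wedge (2*n) k
  have hmono2 : Nat.choose (2*n) k ≤ Nat.choose (2*n) (k+2) := by omega
  omega

end
end

section
/- A column indexed by subsets A = {p_1<...<p_s} and D = {q_1<...<q_t} of {1,...,n}, with I = A ∩ D = {i_1<...<i_r}, is semistandard symplectic (i.e. the complement {1,...,n}\(A∪D) contains at least one element > i_r, at least two elements > i_{r-1}, ..., at least r elements > i_1) if and only if there exists a subset J = {j_1<...<j_r} of {1,...,n}\(A∪D) with i_1 < j_1, i_2 < j_2, ..., i_r < j_r. -/
/-- The increasing enumeration of a finite set of integers. -/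
def fsort (X : Finset ℤ) : List ℤ := X.sort (· ≤ ·)

/-- The `m`-th smallest element of `X` (0-based; junk value `0` out of range). -/
def nthF (X : Finset ℤ) (m : ℕ) : ℤ := (fsort X).getD m 0

/-- `J` dominates `I` elementwise: `#J = #I` and `i_m < j_m` for all `m`. -/
def Dominates (I J : Finset ℤ) : Prop :=
  J.card = I.card ∧ ∀ m, m < I.card → nthF I m < nthF J m

/-- Lexicographic comparison of finite sets of integers via their increasing enumerations. -/
def lexLE (X Y : Finset ℤ) : Prop := X = Y ∨ List.Lex (· < ·) (fsort X) (fsort Y)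

lemma sorted_getElem_le (L : List ℤ) (h : L.Pairwise (· < ·)) {i j : ℕ} (hij : i ≤ j)
    (hj : j < L.length) : L[i]'(lt_of_le_of_lt hij hj) ≤ L[j] := by
  rcases eq_or_lt_of_le hij with rfl | h'
  · exact le_refl _
  · exact le_of_lt (List.pairwise_iff_get.1 h ⟨i, lt_of_le_of_lt hij hj⟩ ⟨j, hj⟩ h')

theorem key_iff (I C : Finset ℤ) :
    (∀ m, m < I.card → I.card - m ≤ (C.filter (fun c => nthF I m < c)).card) ↔
      ∃ J ⊆ C, Dominates I J := by
  constructor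
  · intro h
    by_cases hr : I.card = 0
    · exact ⟨∅, Finset.empty_subset _, by simp [Dominates, hr]⟩
    · set r := I.card with hrdef
      set L := fsort C with hLdef
      have hL : L.Pairwise (· < ·) := (Finset.sortedLT_sort C).pairwise
      have hlen : L.length = C.card := Finset.length_sort _
      have hrk : r ≤ L.length := by
        have h0 := h 0 (by omega)
        have h1 : (C.filter (fun c => nthF I 0 < c)).card ≤ C.card :=
          Finset.card_le_card (Finset.filter_subset _ _)
        omega
      set k := L.length with hkdef
      set Jl := L.drop (k - r) with hJldef
      have hJl_len : Jl.length = r := by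
        rw [hJldef, List.length_drop]; omega
      have hJl_sorted : Jl.Pairwise (· < ·) := List.Pairwise.sublist (List.drop_sublist _ _) hL
      have hnd : Jl.Nodup := hJl_sorted.imp (fun h => ne_of_lt h)
      set J := Jl.toFinset with hJdef
      have hfs : fsort J = Jl :=
        (List.toFinset_sort _ hnd).2 (hJl_sorted.imp (fun h => le_of_lt h))
      refine ⟨J, ?_, ?_, ?_⟩
      · intro a ha
        rw [hJdef, List.mem_toFinset] at ha
        exact (Finset.mem_sort _).1 ((List.drop_sublist _ _).subset ha)
      · rw [hJdef, List.toFinset_card_of_nodup hnd, hJl_len]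
      · intro m hm
        have hm' : m < Jl.length := by omega
        have hidx : k - r + m < k := by omega
        have hval : nthF J m = L[k - r + m]'hidx := by
          rw [nthF, hfs, List.getD_eq_getElem Jl 0 hm']
          simp only [hJldef, List.getElem_drop]
        rw [hval]
        by_contra hcon
        push_neg at hcon
        have hsub : C.filter (fun c => nthF I m < c) ⊆ (L.drop (k - r + m + 1)).toFinset := by
          intro c hc
          rw [Finset.mem_filter] at hc
          obtain ⟨hcC, hcx⟩ := hc
          have hcL : c ∈ L := (Finset.mem_sort _).2 hcC
          obtain ⟨⟨j, hj⟩, hget⟩ := List.mem_iff_get.1 hcL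
          simp only [List.get_eq_getElem] at hget
          have hj2 : k - r + m + 1 ≤ j := by
            by_contra hle
            push_neg at hle
            have hle' : L[j] ≤ L[k - r + m]'hidx :=
              sorted_getElem_le L hL (show j ≤ k - r + m by omega) hidx
            rw [hget] at hle'
            exact absurd (lt_of_le_of_lt (le_trans hle' hcon) hcx) (lt_irrefl c)
          rw [List.mem_toFinset]
          have hjd : j - (k - r + m + 1) < (L.drop (k - r + m + 1)).length := by
            rw [List.length_drop]; omega
          have hval2 : (L.drop (k - r + m + 1))[j - (k - r + m + 1)]'hjd = c := by
            rw [List.getElem_drop]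
            convert hget using 2
            omega
          exact hval2 ▸ List.getElem_mem _
        have hcard : (C.filter (fun c => nthF I m < c)).card ≤ r - m - 1 := by
          calc (C.filter (fun c => nthF I m < c)).card
              ≤ (L.drop (k - r + m + 1)).toFinset.card := Finset.card_le_card hsub
            _ ≤ (L.drop (k - r + m + 1)).length := List.toFinset_card_le _
            _ = k - (k - r + m + 1) := List.length_drop
            _ = r - m - 1 := by omega
        have := h m hm
        omega
  · rintro ⟨J, hJC, hcard, hdom⟩ m hm
    set LJ := fsort J with hLJdef
    have hlenJ : LJ.length = I.card := by rw [hLJdef, fsort, Finset.length_sort, hcard]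
    have hsJ : LJ.Pairwise (· < ·) := (Finset.sortedLT_sort J).pairwise
    have hsub : (LJ.drop m).toFinset ⊆ J.filter (fun c => nthF I m < c) := by
      intro a ha
      rw [List.mem_toFinset] at ha
      obtain ⟨⟨i, hi⟩, hget⟩ := List.mem_iff_get.1 ha
      simp only [List.get_eq_getElem, List.getElem_drop] at hget
      have him : m + i < LJ.length := by
        rw [List.length_drop] at hi; omega
      have haJ : a ∈ J := by
        have h2 : a ∈ LJ := (List.drop_sublist _ _).subset ha
        rw [hLJdef, fsort] at h2
        exact (Finset.mem_sort _).1 h2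
      have h1 : nthF J m ≤ a := by
        have hmlt : m < LJ.length := by omega
        rw [nthF, ← hLJdef, List.getD_eq_getElem _ _ hmlt, ← hget]
        exact sorted_getElem_le LJ hsJ (Nat.le_add_right m i) him
      exact Finset.mem_filter.2 ⟨haJ, lt_of_lt_of_le (hdom m hm) h1⟩
    have hnd : (LJ.drop m).Nodup := (Finset.sort_nodup _ _).sublist (List.drop_sublist _ _)
    calc I.card - m = (LJ.drop m).length := by rw [List.length_drop, hlenJ]
      _ = (LJ.drop m).toFinset.card := (List.toFinset_card_of_nodup hnd).symm
      _ ≤ (J.filter (fun c => nthF I m < c)).card := Finset.card_le_card hsub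
      _ ≤ (C.filter (fun c => nthF I m < c)).card :=
          Finset.card_le_card (Finset.filter_subset_filter _ hJC)

/-- Let `A, D ⊆ {1,…,n}` with `#A + #D ≤ n` and `I = A ∩ D = {i_1 < … < i_r}`.
The column is semistandard symplectic — i.e. for each `m`, the complement
`{1,…,n} \ (A ∪ D)` contains at least `r + 1 - m` elements `> i_m` (0-based: at least `r - m`
elements greater than the `m`-th smallest element of `I`) — if and only if there exists
`J = {j_1 < … < j_r} ⊆ {1,…,n} \ (A ∪ D)` with `i_1 < j_1, …, i_r < j_r`. -/
theorem semistandard_column_iff (n : ℕ) (A D : Finset ℤ)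
    (hA : A ⊆ Finset.Icc 1 (n : ℤ)) (hD : D ⊆ Finset.Icc 1 (n : ℤ))
    (hc : A.card + D.card ≤ n) :
    (∀ m, m < (A ∩ D).card →
        (A ∩ D).card - m ≤
          ((Finset.Icc 1 (n : ℤ) \ (A ∪ D)).filter (fun c => nthF (A ∩ D) m < c)).card) ↔
      ∃ J ⊆ Finset.Icc 1 (n : ℤ) \ (A ∪ D), Dominates (A ∩ D) J :=
  key_iff (A ∩ D) (Finset.Icc 1 (n : ℤ) \ (A ∪ D))
end

section
/- For a semistandard symplectic column f(A,D) with I = A∩D, let J be the lexicographically smallest subset {j_1<...<j_r} of {1,...,n}\(A∪D) with #J = #I and i_k < j_k for all k, and set B = (A\I)∪J, C = (D\I)∪J. Then J = B ∩ C, and I is the largest subset {i_1<...<i_r} of Z\(B∪C) (for the lexicographic order) with i_k < j_k for all k; in particular the map (A,D) ↦ (B,C) is injective, i.e. one can recover (A,D) from (B,C). -/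
lemma fsort_sorted (X : Finset ℤ) : (fsort X).SortedLT := Finset.sortedLT_sort X
lemma fsort_length (X : Finset ℤ) : (fsort X).length = X.card := Finset.length_sort _
lemma mem_fsort {X : Finset ℤ} {a : ℤ} : a ∈ fsort X ↔ a ∈ X := Finset.mem_sort _

lemma fsort_inj {X Y : Finset ℤ} (h : fsort X = fsort Y) : X = Y := by
  have := congrArg List.toFinset h
  rwa [fsort, fsort, Finset.sort_toFinset, Finset.sort_toFinset] at this

lemma nthF_eq_get {X : Finset ℤ} {m : ℕ} (h : m < X.card) :
    nthF X m = (fsort X).get ⟨m, by rwa [fsort_length]⟩ := by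
  unfold nthF
  rw [List.getD_eq_getElem _ _ (by rwa [fsort_length])]
  simp

lemma nthF_mem {X : Finset ℤ} {m : ℕ} (h : m < X.card) : nthF X m ∈ X := by
  rw [nthF_eq_get h]; exact mem_fsort.1 (List.get_mem _ _)

lemma nthF_strictMono {X : Finset ℤ} {m m' : ℕ} (h : m < m') (h' : m' < X.card) :
    nthF X m < nthF X m' := by
  rw [nthF_eq_get (lt_trans h h'), nthF_eq_get h']
  exact (fsort_sorted X).strictMono_get (by simpa using h)

lemma nthF_mono {X : Finset ℤ} {m m' : ℕ} (h : m ≤ m') (h' : m' < X.card) :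
    nthF X m ≤ nthF X m' := by
  rcases eq_or_lt_of_le h with rfl | h
  · exact le_rfl
  · exact (nthF_strictMono h h').le

lemma exists_index {X : Finset ℤ} {x : ℤ} (h : x ∈ X) :
    ∃ m, m < X.card ∧ nthF X m = x := by
  have : x ∈ fsort X := mem_fsort.2 h
  obtain ⟨⟨m, hm⟩, hget⟩ := List.mem_iff_get.1 this
  exact ⟨m, by rwa [fsort_length] at hm, by rw [nthF_eq_get (by rwa [fsort_length] at hm)]; exact hget⟩

/-- number of elements of `X` that are `≤ t`. -/
def cnt (X : Finset ℤ) (t : ℤ) : ℕ := (X.filter (· ≤ t)).card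

lemma cnt_le_card (X : Finset ℤ) (t : ℤ) : cnt X t ≤ X.card :=
  Finset.card_le_card (Finset.filter_subset _ _)

lemma cnt_mono (X : Finset ℤ) {s t : ℤ} (h : s ≤ t) : cnt X s ≤ cnt X t := by
  apply Finset.card_le_card
  intro x hx
  rw [Finset.mem_filter] at hx ⊢
  exact ⟨hx.1, hx.2.trans h⟩

lemma cnt_subset {X Y : Finset ℤ} (h : X ⊆ Y) (t : ℤ) : cnt X t ≤ cnt Y t := by
  apply Finset.card_le_card
  intro x hx
  rw [Finset.mem_filter] at hx ⊢
  exact ⟨h hx.1, hx.2⟩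

lemma cnt_insert {s : ℤ} {X : Finset ℤ} (h : s ∉ X) (t : ℤ) :
    cnt (insert s X) t = cnt X t + if s ≤ t then 1 else 0 := by
  unfold cnt
  rw [Finset.filter_insert]
  split
  · rw [Finset.card_insert_of_notMem (fun hc => h (Finset.mem_filter.1 hc).1)]
  · simp

lemma cnt_erase {s : ℤ} {X : Finset ℤ} (h : s ∈ X) (t : ℤ) :
    cnt X t = cnt (X.erase s) t + if s ≤ t then 1 else 0 := by
  unfold cnt
  rw [Finset.filter_erase]
  split
  · rename_i hst
    have hm : s ∈ X.filter (· ≤ t) := Finset.mem_filter.2 ⟨h, hst⟩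
    have hpos := Finset.card_pos.2 ⟨s, hm⟩
    rw [Finset.card_erase_of_mem hm]
    omega
  · rename_i hst
    have hnm : s ∉ X.filter (· ≤ t) := fun hc => hst (Finset.mem_filter.1 hc).2
    rw [Finset.erase_eq_of_notMem hnm]
    omega

lemma nthF_le_iff {X : Finset ℤ} {m : ℕ} (hm : m < X.card) (t : ℤ) :
    nthF X m ≤ t ↔ m < cnt X t := by
  constructor
  · intro h
    have hsub : (Finset.range (m + 1)).image (nthF X) ⊆ X.filter (· ≤ t) := by
      intro x hx
      simp only [Finset.mem_image, Finset.mem_range, Nat.lt_succ_iff] at hx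
      obtain ⟨k, hk, rfl⟩ := hx
      exact Finset.mem_filter.2 ⟨nthF_mem (lt_of_le_of_lt hk hm), (nthF_mono hk hm).trans h⟩
    have hinj : Set.InjOn (nthF X) (Finset.range (m + 1)) := by
      intro a ha b hb hab
      simp only [Finset.coe_range, Set.mem_Iio] at ha hb
      by_contra hne
      rcases Nat.lt_or_ge a b with hlt | hge
      · exact absurd hab (ne_of_lt (nthF_strictMono hlt (by omega)))
      · have : b < a := by omega
        exact absurd hab.symm (ne_of_lt (nthF_strictMono this (by omega)))
    have hcard := Finset.card_le_card hsub
    rw [Finset.card_image_of_injOn hinj, Finset.card_range] at hcard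
    exact hcard
  · intro h
    by_contra hc
    push_neg at hc
    have hsub : X.filter (· ≤ t) ⊆ (Finset.range m).image (nthF X) := by
      intro x hx
      obtain ⟨hxX, hxt⟩ := Finset.mem_filter.1 hx
      obtain ⟨k, hk, hke⟩ := exists_index hxX
      have hkm : k < m := by
        by_contra hkm
        push_neg at hkm
        have := nthF_mono hkm hk
        rw [hke] at this
        omega
      exact Finset.mem_image.2 ⟨k, Finset.mem_range.2 hkm, hke⟩
    have := (Finset.card_le_card hsub).trans Finset.card_image_le
    rw [Finset.card_range] at this
    unfold cnt at h
    omega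

lemma lt_nthF_iff {X : Finset ℤ} {m : ℕ} (hm : m < X.card) (t : ℤ) :
    t < nthF X m ↔ cnt X t ≤ m := by
  have h := nthF_le_iff hm t
  constructor
  · intro hlt
    by_contra hc
    push_neg at hc
    exact absurd (h.2 hc) (not_le.2 hlt)
  · intro hle
    by_contra hc
    push_neg at hc
    have := h.1 hc
    omega
-- Lex intro from first difference
lemma lex_of_getD : ∀ (m : ℕ) (l₁ l₂ : List ℤ), m < l₁.length → m < l₂.length →
    (∀ k, k < m → l₁.getD k 0 = l₂.getD k 0) → l₁.getD m 0 < l₂.getD m 0 →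
    List.Lex (· < ·) l₁ l₂ := by
  intro m
  induction m with
  | zero =>
    intro l₁ l₂ h₁ h₂ _ h
    match l₁, l₂ with
    | a :: t₁, b :: t₂ => exact List.Lex.rel (by simpa using h)
  | succ m ih =>
    intro l₁ l₂ h₁ h₂ hk h
    match l₁, l₂ with
    | a :: t₁, b :: t₂ =>
      have hab : a = b := by simpa using hk 0 (Nat.succ_pos m)
      subst hab
      exact List.Lex.cons (ih t₁ t₂ (by simpa using h₁) (by simpa using h₂)
        (fun k hkm => by simpa using hk (k + 1) (by omega)) (by simpa using h))

-- Lex elim: extract first difference (for equal-length lists)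
lemma lex_getD_exists : ∀ {l₁ l₂ : List ℤ}, List.Lex (· < ·) l₁ l₂ → l₁.length = l₂.length →
    ∃ m, m < l₁.length ∧ (∀ k, k < m → l₁.getD k 0 = l₂.getD k 0) ∧ l₁.getD m 0 < l₂.getD m 0 := by
  intro l₁ l₂ h
  induction h with
  | nil => intro hl; simp at hl
  | @rel a l₁ b l₂ hab => intro _; exact ⟨0, by simp, by omega, by simpa using hab⟩
  | @cons a l₁ l₂ h ih =>
    intro hl
    obtain ⟨m, hm, hk, hlt⟩ := ih (by simpa using hl)
    refine ⟨m + 1, by simpa using hm, ?_, by simpa using hlt⟩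
    intro k hkm
    match k with
    | 0 => simp
    | k + 1 => simpa using hk k (by omega)

lemma lexLT_of_nthF {X Y : Finset ℤ} (hcard : X.card = Y.card) {m : ℕ} (hm : m < X.card)
    (hk : ∀ k, k < m → nthF X k = nthF Y k) (h : nthF X m < nthF Y m) :
    List.Lex (· < ·) (fsort X) (fsort Y) :=
  lex_of_getD m _ _ (by rwa [fsort_length]) (by rw [fsort_length]; omega) hk h

lemma nthF_exists_of_lex {X Y : Finset ℤ} (hcard : X.card = Y.card)
    (h : List.Lex (· < ·) (fsort X) (fsort Y)) :
    ∃ m, m < X.card ∧ (∀ k, k < m → nthF X k = nthF Y k) ∧ nthF X m < nthF Y m := by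
  obtain ⟨m, hm, hk, hlt⟩ := lex_getD_exists h (by rw [fsort_length, fsort_length, hcard])
  exact ⟨m, by rwa [fsort_length] at hm, hk, hlt⟩

-- Dominates via counts
lemma cnt_le_of_dominates {I Y : Finset ℤ} (h : Dominates I Y) (t : ℤ) :
    cnt Y t ≤ cnt I (t - 1) := by
  rcases Nat.eq_zero_or_pos (cnt Y t) with hc | hc
  · omega
  · set c := cnt Y t with hcdef
    have hc1 : c - 1 < Y.card := by have := cnt_le_card Y t; omega
    have hYle : nthF Y (c - 1) ≤ t := (nthF_le_iff hc1 t).2 (by omega)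
    have hc2 : c - 1 < I.card := by rw [← h.1]; omega
    have hI : nthF I (c - 1) < nthF Y (c - 1) := h.2 _ hc2
    have : nthF I (c - 1) ≤ t - 1 := by omega
    have := (nthF_le_iff hc2 (t - 1)).1 this
    omega

lemma dominates_of_cnt {I Y : Finset ℤ} (hcard : Y.card = I.card)
    (h : ∀ t, cnt Y t ≤ cnt I (t - 1)) : Dominates I Y := by
  refine ⟨hcard, fun m hm => ?_⟩
  have hmY : m < Y.card := by omega
  set t := nthF Y m with ht
  have h1 : m < cnt Y t := (nthF_le_iff hmY t).1 le_rfl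
  have h2 : m < cnt I (t - 1) := lt_of_lt_of_le h1 (h t)
  have := (nthF_le_iff hm (t - 1)).2 h2
  omega
/-- **Swap lemma.** If `Y` dominates `I` and there is `s ∉ Y` with `i_k < s < y_k`,
then replacing `y_k` by `s` gives a set dominating `I` that is lex-smaller than `Y`. -/
lemma swap_lemma {I Y : Finset ℤ} (hdom : Dominates I Y) {k : ℕ} (hk : k < I.card)
    {s : ℤ} (hs : s ∉ Y) (h1 : nthF I k < s) (h2 : s < nthF Y k) :
    Dominates I (insert s (Y.erase (nthF Y k))) ∧
    List.Lex (· < ·) (fsort (insert s (Y.erase (nthF Y k)))) (fsort Y) := by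
  have hkY : k < Y.card := by rw [hdom.1]; exact hk
  set jk := nthF Y k with hjk
  have hjkY : jk ∈ Y := nthF_mem hkY
  set Y' := insert s (Y.erase jk) with hY'
  have hsne : s ∉ Y.erase jk := fun hc => hs (Finset.mem_of_mem_erase hc)
  have hcard' : Y'.card = Y.card := by
    rw [hY', Finset.card_insert_of_notMem hsne, Finset.card_erase_of_mem hjkY]
    have := Finset.card_pos.2 ⟨jk, hjkY⟩
    omega
  -- count formula for Y'
  have hcnt : ∀ t, cnt Y' t + (if jk ≤ t then 1 else 0) = cnt Y t + (if s ≤ t then 1 else 0) := by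
    intro t
    rw [hY', cnt_insert hsne t, cnt_erase (s := jk) hjkY t]
    omega
  -- domination
  have hdom' : Dominates I Y' := by
    refine dominates_of_cnt (by rw [hcard', hdom.1]) (fun t => ?_)
    have hbase := cnt_le_of_dominates hdom t
    have h := hcnt t
    by_cases hst : s ≤ t
    · by_cases hjt : jk ≤ t
      · simp [hst, hjt] at h; omega
      · -- s ≤ t < jk
        simp [hst, hjt] at h
        have hYt : cnt Y t ≤ k := (lt_nthF_iff hkY t).1 (by push_neg at hjt; omega)
        have hIt : k < cnt I (t - 1) := (nthF_le_iff hk (t - 1)).1 (by omega)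
        omega
    · have hjt : ¬ jk ≤ t := by push_neg at hst ⊢; omega
      simp [hst, hjt] at h; omega
  refine ⟨hdom', ?_⟩
  -- lexicographic comparison: first difference at index p = cnt Y s
  set p := cnt Y s with hp
  have hpk : p ≤ k := (lt_nthF_iff hkY s).1 h2
  have hpY : p < Y.card := by omega
  have hpY' : p < Y'.card := by omega
  -- auxiliary: cnt Y' u = cnt Y u for u < s
  have hcnt_lt : ∀ u, u < s → cnt Y' u = cnt Y u := by
    intro u hu
    have h := hcnt u
    have h1' : ¬ s ≤ u := by omega
    have h2' : ¬ jk ≤ u := by omega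
    simp [h1', h2'] at h; omega
  apply lexLT_of_nthF hcard' hpY'
  · -- prefix equality
    intro q hq
    have hqY : q < Y.card := by omega
    have hqY' : q < Y'.card := by omega
    have htle : nthF Y q ≤ s := (nthF_le_iff hqY s).2 (by omega)
    have htne : nthF Y q ≠ s := fun hc => hs (hc ▸ nthF_mem hqY)
    have htlt : nthF Y q < s := lt_of_le_of_ne htle htne
    have hle1 : nthF Y' q ≤ nthF Y q := by
      refine (nthF_le_iff hqY' _).2 ?_
      rw [hcnt_lt _ htlt]
      exact (nthF_le_iff hqY _).1 le_rfl
    have hult : nthF Y' q < s := by omega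
    have hle2 : nthF Y q ≤ nthF Y' q := by
      refine (nthF_le_iff hqY _).2 ?_
      rw [← hcnt_lt _ hult]
      exact (nthF_le_iff hqY' _).1 le_rfl
    omega
  · -- position p : nthF Y' p = s < nthF Y p
    have hYp : s < nthF Y p := (lt_nthF_iff hpY s).2 le_rfl
    have hcY's : cnt Y' s = p + 1 := by
      have h := hcnt s
      have h1' : (s:ℤ) ≤ s := le_rfl
      have h2' : ¬ jk ≤ s := by omega
      simp [h1', h2'] at h; omega
    have hle : nthF Y' p ≤ s := (nthF_le_iff hpY' s).2 (by omega)
    have hge : s ≤ nthF Y' p := by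
      by_contra hc
      push_neg at hc
      have : p < cnt Y' (nthF Y' p) := (nthF_le_iff hpY' _).1 le_rfl
      rw [hcnt_lt _ hc] at this
      have := (cnt_mono Y (by omega : nthF Y' p ≤ s)).trans_lt' this
      omega
    omega
/-- **Part 2 as a lemma.** `A ∩ D` is lexicographically largest among sets disjoint from
`B ∪ C`, of cardinality `#J`, dominated elementwise by `J`. -/
lemma lexmax_aux (n : ℕ) (A D : Finset ℤ)
    (hA : A ⊆ Finset.Icc 1 (n : ℤ))
    (J : Finset ℤ) (hJsub : J ⊆ Finset.Icc 1 (n : ℤ) \ (A ∪ D))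
    (hJdom : Dominates (A ∩ D) J)
    (hJmin : ∀ J', J' ⊆ Finset.Icc 1 (n : ℤ) \ (A ∪ D) → Dominates (A ∩ D) J' → lexLE J J')
    (I' : Finset ℤ)
    (hI'sub : ∀ x ∈ I', x ∉ ((A \ (A ∩ D)) ∪ J) ∪ ((D \ (A ∩ D)) ∪ J))
    (hI'card : I'.card = J.card)
    (hI'dom : ∀ m, m < J.card → nthF I' m < nthF J m) :
    lexLE I' (A ∩ D) := by
  set I := A ∩ D with hIdef
  have hcardIJ : J.card = I.card := hJdom.1
  have hcardI' : I'.card = I.card := by rw [hI'card, hcardIJ]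
  rcases trichotomous_of (List.Lex ((· < ·) : ℤ → ℤ → Prop)) (fsort I') (fsort I) with h | h | h
  · exact Or.inr h
  · exact Or.inl (fsort_inj h)
  · exfalso
    obtain ⟨m, hm, hpre, hlt⟩ := nthF_exists_of_lex (by omega) h
    -- key induction: while entries of I' stay in I, their index in I strictly exceeds position
    have key : ∀ t, m ≤ t → t < I.card → (∀ u, m ≤ u → u ≤ t → nthF I' u ∈ I) →
        ∃ q, t < q ∧ q < I.card ∧ nthF I' t = nthF I q := by
      intro t ht
      induction t, ht using Nat.le_induction with
      | base =>
        intro htI hall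
        obtain ⟨q, hq, hqe⟩ := exists_index (hall m le_rfl le_rfl)
        refine ⟨q, ?_, hq, hqe.symm⟩
        by_contra hc
        push_neg at hc
        have := nthF_mono hc hm
        rw [hqe] at this
        omega
      | succ t ht ih =>
        intro htI hall
        obtain ⟨q, hq1, hq2, hq3⟩ := ih (by omega) (fun u hu1 hu2 => hall u hu1 (by omega))
        obtain ⟨q', hq', hq'e⟩ := exists_index (hall (t + 1) (by omega) le_rfl)
        refine ⟨q', ?_, hq', hq'e.symm⟩
        have hstep : nthF I' t < nthF I' (t + 1) := nthF_strictMono (Nat.lt_succ_self t) (by omega)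
        by_contra hc
        push_neg at hc
        have hq'q : q' ≤ q := by omega
        have := nthF_mono hq'q hq2
        rw [hq'e, ← hq3] at this
        omega
    -- find the first index ≥ m whose I'-entry escapes I
    set T := (Finset.range I.card).filter (fun k => m ≤ k ∧ nthF I' k ∉ I) with hT
    have hTne : T.Nonempty := by
      by_contra hTe
      rw [Finset.not_nonempty_iff_eq_empty] at hTe
      have hall : ∀ u, m ≤ u → u ≤ I.card - 1 → nthF I' u ∈ I := by
        intro u hu1 hu2
        by_contra hc
        have hu : u ∈ T := Finset.mem_filter.2 ⟨Finset.mem_range.2 (by omega), hu1, hc⟩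
        rw [hTe] at hu
        simp at hu
      obtain ⟨q, hq1, hq2, _⟩ := key (I.card - 1) (by omega) (by omega) hall
      omega
    have hkT := T.min'_mem hTne
    set k := T.min' hTne with hkdef
    rw [hT, Finset.mem_filter, Finset.mem_range] at hkT
    obtain ⟨hkr, hmk, hsI⟩ := hkT
    have hmin : ∀ u, m ≤ u → u < k → nthF I' u ∈ I := by
      intro u h1 h2
      by_contra hc
      have hu : u ∈ T := Finset.mem_filter.2 ⟨Finset.mem_range.2 (by omega), h1, hc⟩
      have := T.min'_le u hu
      omega
    -- the escaping entry s := nthF I' k satisfies nthF I k < s < nthF J k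
    have hsgt : nthF I k < nthF I' k := by
      rcases eq_or_lt_of_le hmk with heq | hmk'
      · rw [← heq]; exact hlt
      · obtain ⟨q, hq1, hq2, hq3⟩ := key (k - 1) (by omega) (by omega)
          (fun u h1 h2 => hmin u h1 (by omega))
        have h4 : nthF I k ≤ nthF I q := nthF_mono (by omega) hq2
        have h5 : nthF I' (k - 1) < nthF I' k := nthF_strictMono (by omega) (by omega)
        omega
    have hkJ : k < J.card := by omega
    have hslt : nthF I' k < nthF J k := hI'dom k hkJ
    have hsI' : nthF I' k ∈ I' := nthF_mem (by omega)
    have hsBC := hI'sub _ hsI'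
    have hsnJ : nthF I' k ∉ J :=
      fun hc => hsBC (Finset.mem_union_left _ (Finset.mem_union_right _ hc))
    have hsnA : nthF I' k ∉ A := fun hc => hsBC
      (Finset.mem_union_left _ (Finset.mem_union_left _ (Finset.mem_sdiff.2 ⟨hc, hsI⟩)))
    have hsnD : nthF I' k ∉ D := fun hc => hsBC
      (Finset.mem_union_right _ (Finset.mem_union_left _ (Finset.mem_sdiff.2 ⟨hc, hsI⟩)))
    have h1n : (1:ℤ) ≤ nthF I k := by
      have hmemI : nthF I k ∈ I := nthF_mem (by omega)
      rw [hIdef] at hmemI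
      have := hA (Finset.mem_inter.1 hmemI).1
      exact (Finset.mem_Icc.1 this).1
    have hJn : nthF J k ≤ (n:ℤ) := by
      have := Finset.mem_sdiff.1 (hJsub (nthF_mem hkJ))
      exact (Finset.mem_Icc.1 this.1).2
    have hsIcc : nthF I' k ∈ Finset.Icc 1 (n:ℤ) := Finset.mem_Icc.2 ⟨by omega, by omega⟩
    obtain ⟨hdom', hlex'⟩ := swap_lemma hJdom (show k < I.card by omega) hsnJ hsgt hslt
    have hY'sub : insert (nthF I' k) (J.erase (nthF J k)) ⊆ Finset.Icc 1 (n:ℤ) \ (A ∪ D) := by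
      intro x hx
      rcases Finset.mem_insert.1 hx with rfl | hx
      · refine Finset.mem_sdiff.2 ⟨hsIcc, ?_⟩
        rw [Finset.mem_union]
        rintro (hc | hc)
        · exact hsnA hc
        · exact hsnD hc
      · exact hJsub (Finset.mem_of_mem_erase hx)
    have hml : J = insert (nthF I' k) (J.erase (nthF J k)) ∨
        List.Lex (· < ·) (fsort J) (fsort (insert (nthF I' k) (J.erase (nthF J k)))) :=
      hJmin _ hY'sub hdom'
    rcases hml with heq | hlex2
    · exact hsnJ (heq ▸ Finset.mem_insert_self _ _)
    · exact asymm hlex' hlex2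
lemma part1_aux (A D J : Finset ℤ) :
    J = ((A \ (A ∩ D)) ∪ J) ∩ ((D \ (A ∩ D)) ∪ J) := by
  ext x
  simp only [Finset.mem_inter, Finset.mem_union, Finset.mem_sdiff]
  tauto

lemma sdiff_recover (X Y Jj : Finset ℤ) (hd : ∀ x ∈ Jj, x ∉ X ∪ Y) :
    ((X \ (X ∩ Y)) ∪ Jj) \ Jj = X \ (X ∩ Y) := by
  ext x
  simp only [Finset.mem_sdiff, Finset.mem_union, Finset.mem_inter]
  constructor
  · rintro ⟨h1 | h1, h2⟩
    · exact h1
    · exact absurd h1 h2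
  · intro h1
    exact ⟨Or.inl h1, fun hj => hd x hj (Finset.mem_union_left _ h1.1)⟩


/-- Let `f(A,D)` be a semistandard symplectic column (`A, D ⊆ {1,…,n}`,
`#A + #D ≤ n`), `I = A ∩ D`, and let `J` be the lexicographically smallest subset of
`{1,…,n} \ (A ∪ D)` with `#J = #I` dominating `I` elementwise.  Set `B = (A\I) ∪ J` and
`C = (D\I) ∪ J`.  Then `J = B ∩ C`; `I` is the (lexicographically) largest subset of
`ℤ \ (B ∪ C)` of cardinality `#J` dominated elementwise by `J`; and the pair `(A, D)` can be
recovered from `(B, C)` — the assignment `(A,D) ↦ (B,C)` is injective. -/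
theorem double_column_injective (n : ℕ) (A D : Finset ℤ)
    (hA : A ⊆ Finset.Icc 1 (n : ℤ)) (hD : D ⊆ Finset.Icc 1 (n : ℤ))
    (hc : A.card + D.card ≤ n)
    (J : Finset ℤ) (hJsub : J ⊆ Finset.Icc 1 (n : ℤ) \ (A ∪ D))
    (hJdom : Dominates (A ∩ D) J)
    (hJmin : ∀ J', J' ⊆ Finset.Icc 1 (n : ℤ) \ (A ∪ D) → Dominates (A ∩ D) J' → lexLE J J') :
    (J = ((A \ (A ∩ D)) ∪ J) ∩ ((D \ (A ∩ D)) ∪ J)) ∧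
    (∀ I' : Finset ℤ,
        (∀ x ∈ I', x ∉ ((A \ (A ∩ D)) ∪ J) ∪ ((D \ (A ∩ D)) ∪ J)) →
        I'.card = J.card → (∀ m, m < J.card → nthF I' m < nthF J m) →
        lexLE I' (A ∩ D)) ∧
    (∀ A₂ D₂ J₂ : Finset ℤ,
        A₂ ⊆ Finset.Icc 1 (n : ℤ) → D₂ ⊆ Finset.Icc 1 (n : ℤ) → A₂.card + D₂.card ≤ n →
        J₂ ⊆ Finset.Icc 1 (n : ℤ) \ (A₂ ∪ D₂) → Dominates (A₂ ∩ D₂) J₂ →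
        (∀ J', J' ⊆ Finset.Icc 1 (n : ℤ) \ (A₂ ∪ D₂) → Dominates (A₂ ∩ D₂) J' →
          lexLE J₂ J') →
        (A₂ \ (A₂ ∩ D₂)) ∪ J₂ = (A \ (A ∩ D)) ∪ J →
        (D₂ \ (A₂ ∩ D₂)) ∪ J₂ = (D \ (A ∩ D)) ∪ J →
        A₂ = A ∧ D₂ = D) := by
  refine ⟨part1_aux A D J,
    fun I' h1 h2 h3 => lexmax_aux n A D hA J hJsub hJdom hJmin I' h1 h2 h3, ?_⟩
  intro A₂ D₂ J₂ hA₂ hD₂ hc₂ hJ₂sub hJ₂dom hJ₂min hB hC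
  have hJ₂ : J₂ = J := by
    have e1 := part1_aux A₂ D₂ J₂
    rw [hB, hC] at e1
    rw [e1, ← part1_aux A D J]
  have hdisj : ∀ x ∈ J, x ∉ A ∪ D := fun x hx => (Finset.mem_sdiff.1 (hJsub hx)).2
  have hdisj₂ : ∀ x ∈ J₂, x ∉ A₂ ∪ D₂ := fun x hx => (Finset.mem_sdiff.1 (hJ₂sub hx)).2
  -- A₂ ∩ D₂ = A ∩ D
  have hIle : lexLE (A₂ ∩ D₂) (A ∩ D) := by
    apply lexmax_aux n A D hA J hJsub hJdom hJmin
    · intro x hx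
      rw [← hB, ← hC]
      have hxAD : x ∈ A₂ ∪ D₂ := Finset.mem_union_left _ (Finset.mem_inter.1 hx).1
      have hnJ : x ∉ J₂ := fun hj => hdisj₂ x hj hxAD
      intro hcmem
      rcases Finset.mem_union.1 hcmem with h | h <;>
        rcases Finset.mem_union.1 h with h' | h'
      · exact (Finset.mem_sdiff.1 h').2 hx
      · exact hnJ h'
      · exact (Finset.mem_sdiff.1 h').2 hx
      · exact hnJ h'
    · rw [← hJ₂]
      exact hJ₂dom.1.symm
    · rw [← hJ₂]
      intro m hm
      have hcd := hJ₂dom.1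
      exact hJ₂dom.2 m (by omega)
  have hIge : lexLE (A ∩ D) (A₂ ∩ D₂) := by
    apply lexmax_aux n A₂ D₂ hA₂ J₂ hJ₂sub hJ₂dom hJ₂min
    · intro x hx
      rw [hB, hC]
      have hxAD : x ∈ A ∪ D := Finset.mem_union_left _ (Finset.mem_inter.1 hx).1
      have hnJ : x ∉ J := fun hj => hdisj x hj hxAD
      intro hcmem
      rcases Finset.mem_union.1 hcmem with h | h <;>
        rcases Finset.mem_union.1 h with h' | h'
      · exact (Finset.mem_sdiff.1 h').2 hx
      · exact hnJ h'
      · exact (Finset.mem_sdiff.1 h').2 hx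
      · exact hnJ h'
    · rw [hJ₂]
      exact hJdom.1.symm
    · rw [hJ₂]
      intro m hm
      have hcd := hJdom.1
      exact hJdom.2 m (by omega)
  have hII : A₂ ∩ D₂ = A ∩ D := by
    have h1 : A₂ ∩ D₂ = A ∩ D ∨
        List.Lex (· < ·) (fsort (A₂ ∩ D₂)) (fsort (A ∩ D)) := hIle
    have h2 : A ∩ D = A₂ ∩ D₂ ∨
        List.Lex (· < ·) (fsort (A ∩ D)) (fsort (A₂ ∩ D₂)) := hIge
    rcases h1 with he | hl1
    · exact he
    rcases h2 with he | hl2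
    · exact he.symm
    · exact absurd hl2 (asymm hl1)
  have g₂ := sdiff_recover A₂ D₂ J₂ hdisj₂
  have g₁ := sdiff_recover A D J hdisj
  rw [hB, hJ₂] at g₂
  have eA : A₂ \ (A₂ ∩ D₂) = A \ (A ∩ D) := g₂.symm.trans g₁
  have g₂' := sdiff_recover D₂ A₂ J₂ (fun x hx hc' => hdisj₂ x hx (by
    rcases Finset.mem_union.1 hc' with h | h
    · exact Finset.mem_union_right _ h
    · exact Finset.mem_union_left _ h))
  have g₁' := sdiff_recover D A J (fun x hx hc' => hdisj x hx (by
    rcases Finset.mem_union.1 hc' with h | h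
    · exact Finset.mem_union_right _ h
    · exact Finset.mem_union_left _ h))
  rw [Finset.inter_comm D₂ A₂] at g₂'
  rw [Finset.inter_comm D A] at g₁'
  rw [hC, hJ₂] at g₂'
  have eD : D₂ \ (A₂ ∩ D₂) = D \ (A ∩ D) := g₂'.symm.trans g₁'
  constructor
  · have h := (Finset.sdiff_union_of_subset (Finset.inter_subset_left : A₂ ∩ D₂ ⊆ A₂)).symm
    rw [h, eA, hII, Finset.sdiff_union_of_subset (Finset.inter_subset_left : A ∩ D ⊆ A)]
  · have h := (Finset.sdiff_union_of_subset (Finset.inter_subset_right : A₂ ∩ D₂ ⊆ D₂)).symm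
    rw [h, eD, hII, Finset.sdiff_union_of_subset (Finset.inter_subset_right : A ∩ D ⊆ D)]
end
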